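/- arXiv:2012.01992 — 8 statements merged into one kernel-verified Lean document; each statement's English description precedes it below -/
import Mathlib

section
/- For every natural number n ≥ 1, the number of edges of the n-Queens' graph Q(n) equals n(n−1)(5n−1)/3. -/
/-- The `n`-Queens' graph: vertices are the squares of the `n × n` chessboard
(coordinates `0 ≤ i, j ≤ n-1`, i.e. `Fin n × Fin n`); two distinct squares are
adjacent iff they share a row, a column, or a diagonal. -/
def queensGraph (n : ℕ) : SimpleGraph (Fin n × Fin n) where
  Adj u v := u ≠ v ∧ (u.1 = v.1 ∨ u.2 = v.2 ∨
    u.1.val + u.2.val = v.1.val + v.2.val ∨ u.1.val + v.2.val = v.1.val + u.2.val)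
  symm := ⟨by
    rintro u v ⟨hne, h⟩
    refine ⟨hne.symm, ?_⟩
    rcases h with h | h | h | h
    exacts [Or.inl h.symm, Or.inr (Or.inl h.symm), Or.inr (Or.inr (Or.inl h.symm)),
      Or.inr (Or.inr (Or.inr h.symm))]⟩
  loopless := ⟨fun u ⟨hne, _⟩ => hne rfl⟩

instance (n : ℕ) : DecidableRel (queensGraph n).Adj := fun u v =>
  inferInstanceAs (Decidable (u ≠ v ∧ (u.1 = v.1 ∨ u.2 = v.2 ∨
    u.1.val + u.2.val = v.1.val + v.2.val ∨ u.1.val + v.2.val = v.1.val + u.2.val)))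

namespace QueensAux
open Finset

/-- Number of squares on the diagonal `i + j = s` of the `n × n` board. -/
def Lf (n s : ℕ) : ℕ := min (s+1) n - (s+1-n)

lemma card_diag_fiber (n s : ℕ) :
    #(univ.filter (fun v : Fin n × Fin n => v.1.val + v.2.val = s)) = Lf n s := by
  rw [Lf, ← Nat.card_Ico]
  refine Finset.card_bij (fun v _ => v.1.val) ?_ ?_ ?_
  · intro v hv
    simp only [mem_filter, mem_univ, true_and] at hv
    have h1 := v.1.isLt; have h2 := v.2.isLt
    simp only [Finset.mem_Ico]
    omega
  · intro v hv w hw h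
    simp only [mem_filter, mem_univ, true_and] at hv hw
    exact Prod.ext (Fin.ext h) (Fin.ext (by omega))
  · intro a ha
    simp only [Finset.mem_Ico] at ha
    have h1 : a < n := by omega
    have h2 : s - a < n := by omega
    refine ⟨(⟨a, h1⟩, ⟨s - a, h2⟩), ?_, rfl⟩
    simp only [mem_filter, mem_univ, true_and]
    omega

lemma card_anti_fiber (n : ℕ) (u : Fin n × Fin n) :
    #(univ.filter (fun v : Fin n × Fin n => u.1.val + v.2.val = v.1.val + u.2.val))
      = Lf n (u.1.val + (Fin.rev u.2).val) := by
  rw [← card_diag_fiber]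
  refine Finset.card_bij' (fun v _ => (v.1, Fin.rev v.2)) (fun v _ => (v.1, Fin.rev v.2))
    ?_ ?_ ?_ ?_
  · intro v hv
    simp only [mem_filter, mem_univ, true_and] at hv ⊢
    have h1 := v.2.isLt; have h2 := u.2.isLt; have h3 := v.1.isLt
    simp only [Fin.val_rev]
    omega
  · intro v hv
    simp only [mem_filter, mem_univ, true_and, Fin.val_rev] at hv ⊢
    have h1 := v.2.isLt; have h2 := u.2.isLt; have h3 := v.1.isLt
    omega
  · intro v hv; exact Prod.ext rfl (Fin.rev_rev v.2)
  · intro v hv; exact Prod.ext rfl (Fin.rev_rev v.2)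

lemma card_row (n : ℕ) (a : Fin n) :
    #(univ.filter (fun v : Fin n × Fin n => v.1 = a)) = n := by
  have h : (univ.filter (fun v : Fin n × Fin n => v.1 = a)) = {a} ×ˢ univ := by
    ext v
    simp only [mem_filter, mem_univ, true_and, Finset.mem_product,
      Finset.mem_singleton, and_true, true_and]
  rw [h, Finset.card_product]; simp

lemma card_col (n : ℕ) (b : Fin n) :
    #(univ.filter (fun v : Fin n × Fin n => v.2 = b)) = n := by
  have h : (univ.filter (fun v : Fin n × Fin n => v.2 = b)) = univ ×ˢ {b} := by
    ext v
    simp only [mem_filter, mem_univ, true_and, Finset.mem_product,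
      Finset.mem_singleton, and_true, true_and]
  rw [h, Finset.card_product]; simp

lemma sq6 (m : ℕ) : 6 * ∑ k ∈ range (m+1), k^2 = (m+1)*m*(2*m+1) := by
  induction m with
  | zero => simp
  | succ m ih =>
    rw [Finset.sum_range_succ, Nat.mul_add, ih]
    ring

lemma T6 (m : ℕ) :
    6 * ∑ s ∈ range (2*m+1), (Lf (m+1) s)^2 = 4*(m+1)^3 + 2*(m+1) := by
  have hsplit : ∑ s ∈ Ico 0 (m+1), (Lf (m+1) s)^2 + ∑ s ∈ Ico (m+1) (2*m+1), (Lf (m+1) s)^2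
      = ∑ s ∈ Ico 0 (2*m+1), (Lf (m+1) s)^2 :=
    Finset.sum_Ico_consecutive _ (by omega) (by omega)
  rw [Finset.range_eq_Ico, ← hsplit]
  have h1 : ∑ s ∈ Ico 0 (m+1), (Lf (m+1) s)^2 = ∑ k ∈ range (m+2), k^2 := by
    rw [← Finset.range_eq_Ico, Finset.sum_range_succ' (fun k => k^2) (m+1)]
    have : (0:ℕ)^2 = 0 := rfl
    rw [this, Nat.add_zero]
    refine Finset.sum_congr rfl fun s hs => ?_
    simp only [Finset.mem_range] at hs
    have : Lf (m+1) s = s + 1 := by simp only [Lf]; omega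
    rw [this]
  have h2 : ∑ s ∈ Ico (m+1) (2*m+1), (Lf (m+1) s)^2 = ∑ k ∈ range (m+1), k^2 := by
    rw [Finset.sum_Ico_eq_sum_range]
    have he : 2*m+1 - (m+1) = m := by omega
    rw [he]
    have hc : ∀ k ∈ range m, (Lf (m+1) (m+1+k))^2 = (fun j => (j+1)^2) (m - 1 - k) := by
      intro k hk
      simp only [Finset.mem_range] at hk
      have : Lf (m+1) (m+1+k) = m - 1 - k + 1 := by simp only [Lf]; omega
      rw [this]
    rw [Finset.sum_congr rfl hc, Finset.sum_range_reflect (fun j => (j+1)^2) m,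
      Finset.sum_range_succ' (fun k => k^2) m]
    simp
  rw [h1, h2, Nat.mul_add, sq6, sq6]
  ring

lemma degree_eq (n : ℕ) (u : Fin n × Fin n) :
    (queensGraph n).degree u + 4 =
      2 * n + Lf n (u.1.val + u.2.val) + Lf n (u.1.val + (Fin.rev u.2).val) := by
  classical
  set R := (univ.filter (fun v : Fin n × Fin n => v.1 = u.1)).erase u with hR
  set C := (univ.filter (fun v : Fin n × Fin n => v.2 = u.2)).erase u with hC
  set D := (univ.filter (fun v : Fin n × Fin n =>
      v.1.val + v.2.val = u.1.val + u.2.val)).erase u with hD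
  set A := (univ.filter (fun v : Fin n × Fin n =>
      u.1.val + v.2.val = v.1.val + u.2.val)).erase u with hA
  have veq : ∀ v : Fin n × Fin n, v.1.val = u.1.val → v.2.val = u.2.val → v = u := by
    intro v h1 h2; exact Prod.ext (Fin.ext h1) (Fin.ext h2)
  have hsplit : (queensGraph n).neighborFinset u = R ∪ (C ∪ (D ∪ A)) := by
    ext v
    simp only [SimpleGraph.mem_neighborFinset, hR, hC, hD, hA, mem_union, mem_erase,
      mem_filter, mem_univ, true_and, ne_eq]
    show (queensGraph n).Adj u v ↔ _
    unfold queensGraph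
    simp only [ne_eq]
    constructor
    · rintro ⟨hne, h | h | h | h⟩
      · exact Or.inl ⟨fun hvu => hne hvu.symm, h.symm⟩
      · exact Or.inr (Or.inl ⟨fun hvu => hne hvu.symm, h.symm⟩)
      · exact Or.inr (Or.inr (Or.inl ⟨fun hvu => hne hvu.symm, h.symm⟩))
      · exact Or.inr (Or.inr (Or.inr ⟨fun hvu => hne hvu.symm, h⟩))
    · rintro (⟨h1, h2⟩ | ⟨h1, h2⟩ | ⟨h1, h2⟩ | ⟨h1, h2⟩)
      exacts [⟨fun h => h1 h.symm, Or.inl h2.symm⟩,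
        ⟨fun h => h1 h.symm, Or.inr (Or.inl h2.symm)⟩,
        ⟨fun h => h1 h.symm, Or.inr (Or.inr (Or.inl h2.symm))⟩,
        ⟨fun h => h1 h.symm, Or.inr (Or.inr (Or.inr h2))⟩]
  have dRC : Disjoint R C := by
    rw [Finset.disjoint_left]
    rintro v hv hw
    simp only [hR, hC, mem_erase, mem_filter, mem_univ, true_and] at hv hw
    exact hv.1 (veq v (congrArg Fin.val hv.2) (congrArg Fin.val hw.2))
  have dRD : Disjoint R D := by
    rw [Finset.disjoint_left]
    rintro v hv hw
    simp only [hR, hD, mem_erase, mem_filter, mem_univ, true_and] at hv hw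
    have h1 := congrArg Fin.val hv.2
    exact hv.1 (veq v h1 (by omega))
  have dRA : Disjoint R A := by
    rw [Finset.disjoint_left]
    rintro v hv hw
    simp only [hR, hA, mem_erase, mem_filter, mem_univ, true_and] at hv hw
    have h1 := congrArg Fin.val hv.2
    exact hv.1 (veq v h1 (by omega))
  have dCD : Disjoint C D := by
    rw [Finset.disjoint_left]
    rintro v hv hw
    simp only [hC, hD, mem_erase, mem_filter, mem_univ, true_and] at hv hw
    have h1 := congrArg Fin.val hv.2
    exact hv.1 (veq v (by omega) h1)
  have dCA : Disjoint C A := by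
    rw [Finset.disjoint_left]
    rintro v hv hw
    simp only [hC, hA, mem_erase, mem_filter, mem_univ, true_and] at hv hw
    have h1 := congrArg Fin.val hv.2
    exact hv.1 (veq v (by omega) h1)
  have dDA : Disjoint D A := by
    rw [Finset.disjoint_left]
    rintro v hv hw
    simp only [hD, hA, mem_erase, mem_filter, mem_univ, true_and] at hv hw
    exact hv.1 (veq v (by omega) (by omega))
  have hcard : (queensGraph n).degree u = #R + (#C + (#D + #A)) := by
    rw [← SimpleGraph.card_neighborFinset_eq_degree, hsplit,
      Finset.card_union_of_disjoint, Finset.card_union_of_disjoint,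
      Finset.card_union_of_disjoint dDA]
    · exact Finset.disjoint_union_right.mpr ⟨dCD, dCA⟩
    · exact Finset.disjoint_union_right.mpr ⟨dRC, Finset.disjoint_union_right.mpr ⟨dRD, dRA⟩⟩
  have hn : 0 < n := u.1.pos
  have hRcard : #R = n - 1 := by
    rw [hR, Finset.card_erase_of_mem (by simp), card_row]
  have hCcard : #C = n - 1 := by
    rw [hC, Finset.card_erase_of_mem (by simp), card_col]
  have hDcard : #D = Lf n (u.1.val + u.2.val) - 1 := by
    rw [hD, Finset.card_erase_of_mem (by simp), card_diag_fiber]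
  have hAcard : #A = Lf n (u.1.val + (Fin.rev u.2).val) - 1 := by
    rw [hA, Finset.card_erase_of_mem (by simp), card_anti_fiber]
  have hD1 : 1 ≤ Lf n (u.1.val + u.2.val) := by
    rw [← card_diag_fiber]
    exact Finset.card_pos.mpr ⟨u, by simp⟩
  have hA1 : 1 ≤ Lf n (u.1.val + (Fin.rev u.2).val) := by
    rw [← card_anti_fiber]
    exact Finset.card_pos.mpr ⟨u, by simp⟩
  rw [hcard, hRcard, hCcard, hDcard, hAcard]
  omega

end QueensAux

/-- the number of edges of `Q(n)` equals `n(n-1)(5n-1)/3`. -/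
theorem queens_edge_count (n : ℕ) (hn : 1 ≤ n) :
    (queensGraph n).edgeFinset.card = n * (n - 1) * (5 * n - 1) / 3 := by
  classical
  obtain ⟨m, rfl⟩ : ∃ m, n = m + 1 := ⟨n - 1, by omega⟩
  have hdeg := SimpleGraph.sum_degrees_eq_twice_card_edges (queensGraph (m+1))
  have hcardU : (Finset.univ : Finset (Fin (m+1) × Fin (m+1))).card = (m+1)*(m+1) := by
    simp [Finset.card_univ]
  have hfib : ∑ u : Fin (m+1) × Fin (m+1), QueensAux.Lf (m+1) (u.1.val + u.2.val)
      = ∑ s ∈ Finset.range (2*m+1), (QueensAux.Lf (m+1) s)^2 := by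
    have hmaps : ∀ u : Fin (m+1) × Fin (m+1), u ∈ (Finset.univ : Finset _) →
        u.1.val + u.2.val ∈ Finset.range (2*m+1) := by
      intro u _
      have h1 := u.1.isLt; have h2 := u.2.isLt
      simp only [Finset.mem_range]; omega
    rw [← Finset.sum_fiberwise_of_maps_to hmaps
      (fun u => QueensAux.Lf (m+1) (u.1.val + u.2.val))]
    refine Finset.sum_congr rfl fun s hs => ?_
    have h1 : ∀ u ∈ Finset.univ.filter
        (fun u : Fin (m+1) × Fin (m+1) => u.1.val + u.2.val = s),
        QueensAux.Lf (m+1) (u.1.val + u.2.val) = QueensAux.Lf (m+1) s := by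
      intro u hu; simp only [Finset.mem_filter] at hu; rw [hu.2]
    rw [Finset.sum_congr rfl h1, Finset.sum_const, QueensAux.card_diag_fiber,
      smul_eq_mul, sq]
  have hanti : ∑ u : Fin (m+1) × Fin (m+1), QueensAux.Lf (m+1) (u.1.val + (Fin.rev u.2).val)
      = ∑ u : Fin (m+1) × Fin (m+1), QueensAux.Lf (m+1) (u.1.val + u.2.val) :=
    Equiv.sum_comp ((Equiv.refl (Fin (m+1))).prodCongr Fin.revPerm)
      (fun w => QueensAux.Lf (m+1) (w.1.val + w.2.val))
  have hdeg4 : ∑ u : Fin (m+1) × Fin (m+1), ((queensGraph (m+1)).degree u + 4)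
      = (m+1)*(m+1)*(2*(m+1)) +
        ((∑ s ∈ Finset.range (2*m+1), (QueensAux.Lf (m+1) s)^2) +
         (∑ s ∈ Finset.range (2*m+1), (QueensAux.Lf (m+1) s)^2)) := by
    have hc : ∀ u ∈ (Finset.univ : Finset (Fin (m+1) × Fin (m+1))),
        (queensGraph (m+1)).degree u + 4 =
        2 * (m+1) + QueensAux.Lf (m+1) (u.1.val + u.2.val)
          + QueensAux.Lf (m+1) (u.1.val + (Fin.rev u.2).val) :=
      fun u _ => QueensAux.degree_eq (m+1) u
    rw [Finset.sum_congr rfl hc, Finset.sum_add_distrib, Finset.sum_add_distrib,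
      Finset.sum_const, hanti, hfib, hcardU, smul_eq_mul]
    ring
  have hL : ∑ u : Fin (m+1) × Fin (m+1), ((queensGraph (m+1)).degree u + 4)
      = 2 * (queensGraph (m+1)).edgeFinset.card + 4*((m+1)*(m+1)) := by
    rw [Finset.sum_add_distrib, hdeg, Finset.sum_const, hcardU, smul_eq_mul]
    ring
  have h1 := hL.symm.trans hdeg4
  have h2 := QueensAux.T6 m
  have hpoly : 3*((m+1)*(m+1)*(2*(m+1))) + (4*(m+1)^3 + 2*(m+1))
      = 2*((m+1)*m*(5*m+4)) + 12*((m+1)*(m+1)) := by ring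
  have key : 6 * (queensGraph (m+1)).edgeFinset.card = 2*((m+1)*m*(5*m+4)) := by
    linarith
  have e1 : m + 1 - 1 = m := by omega
  have e2 : 5 * (m+1) - 1 = 5*m+4 := by omega
  rw [e1, e2]
  obtain ⟨K, hK⟩ : ∃ K, (m+1)*m*(5*m+4) = K := ⟨_, rfl⟩
  rw [hK] at key ⊢
  omega
end

section
/- Let n ≥ 2. For every vertex v of the n-Queens' graph Q(n), the degree d_v of v satisfies 3(n−1) ≤ d_v, and d_v ≤ 4n−5 if n is even, while d_v ≤ 4n−4 if n is odd. -/
open Finset in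
lemma queens_card_row (n : ℕ) (v : Fin n × Fin n) :
    (Finset.univ.filter fun u : Fin n × Fin n => u.1 = v.1).card = n := by
  rw [Finset.card_bij' (fun u _ => u.2) (fun b _ => (v.1, b))
    (fun u hu => Finset.mem_univ _) (fun b hb => by simp)
    (fun u hu => by simp at hu; exact Prod.ext hu.symm rfl) (fun b hb => rfl)]
  simp

open Finset in
lemma queens_card_col (n : ℕ) (v : Fin n × Fin n) :
    (Finset.univ.filter fun u : Fin n × Fin n => u.2 = v.2).card = n := by
  rw [Finset.card_bij' (fun u _ => u.1) (fun a _ => (a, v.2))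
    (fun u hu => Finset.mem_univ _) (fun a ha => by simp)
    (fun u hu => by simp at hu; exact Prod.ext rfl hu.symm) (fun a ha => rfl)]
  simp

open Finset in
lemma queens_card_sumdiag (n : ℕ) (v : Fin n × Fin n) :
    (Finset.univ.filter fun u : Fin n × Fin n =>
        u.1.val + u.2.val = v.1.val + v.2.val).card
      = min (v.1.val + v.2.val) (n - 1) + 1 - (v.1.val + v.2.val - (n - 1)) := by
  have hi : v.1.val < n := v.1.isLt
  have hj : v.2.val < n := v.2.isLt
  have key := Finset.card_nbij
    (s := Finset.univ.filter fun u : Fin n × Fin n =>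
        u.1.val + u.2.val = v.1.val + v.2.val)
    (t := Finset.Icc (v.1.val + v.2.val - (n - 1)) (min (v.1.val + v.2.val) (n - 1)))
    (i := fun u => u.1.val) ?_ ?_ ?_
  · rw [key, Nat.card_Icc]
  · intro u hu
    simp only [Finset.coe_filter, Set.mem_setOf_eq, Finset.mem_coe, Finset.mem_filter, Finset.mem_univ, true_and] at hu
    have h1 := u.1.isLt
    have h2 := u.2.isLt
    simp only [Finset.coe_Icc, Set.mem_Icc, Finset.mem_coe, Finset.mem_Icc]
    omega
  · intro u hu u' hu' h
    simp only [Finset.coe_filter, Set.mem_setOf_eq, Finset.mem_univ, true_and] at hu hu'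
    have h' : u.1.val = u'.1.val := h
    exact Prod.ext (Fin.ext h') (Fin.ext (by omega))
  · intro b hb
    simp only [Finset.coe_Icc, Set.mem_Icc] at hb
    refine ⟨(⟨b, by omega⟩, ⟨v.1.val + v.2.val - b, by omega⟩), ?_, rfl⟩
    simp only [Finset.coe_filter, Set.mem_setOf_eq, Finset.mem_univ, true_and]
    omega

open Finset in
lemma queens_card_diffdiag (n : ℕ) (v : Fin n × Fin n) :
    (Finset.univ.filter fun u : Fin n × Fin n =>
        u.1.val + v.2.val = v.1.val + u.2.val).card
      = (n - 1) - (v.2.val - v.1.val) + 1 - (v.1.val - v.2.val) := by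
  have hi : v.1.val < n := v.1.isLt
  have hj : v.2.val < n := v.2.isLt
  have key := Finset.card_nbij
    (s := Finset.univ.filter fun u : Fin n × Fin n =>
        u.1.val + v.2.val = v.1.val + u.2.val)
    (t := Finset.Icc (v.1.val - v.2.val) ((n - 1) - (v.2.val - v.1.val)))
    (i := fun u => u.1.val) ?_ ?_ ?_
  · rw [key, Nat.card_Icc]
  · intro u hu
    simp only [Finset.coe_filter, Set.mem_setOf_eq, Finset.mem_coe, Finset.mem_filter, Finset.mem_univ, true_and] at hu
    have h1 := u.1.isLt
    have h2 := u.2.isLt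
    simp only [Finset.coe_Icc, Set.mem_Icc, Finset.mem_coe, Finset.mem_Icc]
    omega
  · intro u hu u' hu' h
    simp only [Finset.coe_filter, Set.mem_setOf_eq, Finset.mem_univ, true_and] at hu hu'
    have h' : u.1.val = u'.1.val := h
    exact Prod.ext (Fin.ext h') (Fin.ext (by omega))
  · intro b hb
    simp only [Finset.coe_Icc, Set.mem_Icc] at hb
    refine ⟨(⟨b, by omega⟩, ⟨b + v.2.val - v.1.val, by omega⟩), ?_, rfl⟩
    simp only [Finset.coe_filter, Set.mem_setOf_eq, Finset.mem_univ, true_and]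
    omega

/-- degree bounds for the vertices of `Q(n)`, `n ≥ 2`. -/
theorem queens_degree_bounds (n : ℕ) (hn : 2 ≤ n) (v : Fin n × Fin n) :
    3 * (n - 1) ≤ (queensGraph n).degree v ∧
      (Even n → (queensGraph n).degree v ≤ 4 * n - 5) ∧
      (Odd n → (queensGraph n).degree v ≤ 4 * n - 4) := by
  classical
  have hi : v.1.val < n := v.1.isLt
  have hj : v.2.val < n := v.2.isLt
  set F1 := (Finset.univ.filter fun u : Fin n × Fin n => u.1 = v.1).erase v with hF1
  set F2 := (Finset.univ.filter fun u : Fin n × Fin n => u.2 = v.2).erase v with hF2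
  set F3 := (Finset.univ.filter fun u : Fin n × Fin n =>
      u.1.val + u.2.val = v.1.val + v.2.val).erase v with hF3
  set F4 := (Finset.univ.filter fun u : Fin n × Fin n =>
      u.1.val + v.2.val = v.1.val + u.2.val).erase v with hF4
  have hN : (queensGraph n).neighborFinset v = F1 ∪ F2 ∪ F3 ∪ F4 := by
    ext u
    rw [SimpleGraph.mem_neighborFinset]
    simp only [SimpleGraph.mem_neighborFinset, queensGraph, hF1, hF2, hF3, hF4,
      Finset.mem_union, Finset.mem_erase, Finset.mem_filter, Finset.mem_univ, true_and,
      ne_eq]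
    constructor
    · rintro ⟨hne, h⟩
      have hne' : ¬ u = v := fun h => hne (h ▸ rfl)
      rcases h with h | h | h | h
      exacts [Or.inl (Or.inl (Or.inl ⟨hne', h.symm⟩)),
        Or.inl (Or.inl (Or.inr ⟨hne', h.symm⟩)),
        Or.inl (Or.inr ⟨hne', h.symm⟩), Or.inr ⟨hne', h.symm⟩]
    · rintro (((⟨hne, h⟩ | ⟨hne, h⟩) | ⟨hne, h⟩) | ⟨hne, h⟩) <;>
        exact ⟨fun h' => hne h'.symm, by
          first
            | exact Or.inl h.symm
            | exact Or.inr (Or.inl h.symm)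
            | exact Or.inr (Or.inr (Or.inl h.symm))
            | exact Or.inr (Or.inr (Or.inr (by omega)))⟩
  have hvmem1 : v ∈ (Finset.univ.filter fun u : Fin n × Fin n => u.1 = v.1) := by simp
  have hvmem2 : v ∈ (Finset.univ.filter fun u : Fin n × Fin n => u.2 = v.2) := by simp
  have hvmem3 : v ∈ (Finset.univ.filter fun u : Fin n × Fin n =>
      u.1.val + u.2.val = v.1.val + v.2.val) := by simp
  have hvmem4 : v ∈ (Finset.univ.filter fun u : Fin n × Fin n =>
      u.1.val + v.2.val = v.1.val + u.2.val) := by simp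
  have c1 : F1.card = n - 1 := by
    rw [hF1, Finset.card_erase_of_mem hvmem1, queens_card_row]
  have c2 : F2.card = n - 1 := by
    rw [hF2, Finset.card_erase_of_mem hvmem2, queens_card_col]
  have c3 : F3.card = min (v.1.val + v.2.val) (n - 1) + 1 - (v.1.val + v.2.val - (n - 1)) - 1 := by
    rw [hF3, Finset.card_erase_of_mem hvmem3, queens_card_sumdiag]
  have c4 : F4.card = (n - 1) - (v.2.val - v.1.val) + 1 - (v.1.val - v.2.val) - 1 := by
    rw [hF4, Finset.card_erase_of_mem hvmem4, queens_card_diffdiag]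
  -- pairwise disjointness
  have key : ∀ u : Fin n × Fin n, u ≠ v →
      (u.1 = v.1 → u.2 = v.2 → False) ∧
      (u.1 = v.1 → u.1.val + u.2.val = v.1.val + v.2.val → False) ∧
      (u.1 = v.1 → u.1.val + v.2.val = v.1.val + u.2.val → False) ∧
      (u.2 = v.2 → u.1.val + u.2.val = v.1.val + v.2.val → False) ∧
      (u.2 = v.2 → u.1.val + v.2.val = v.1.val + u.2.val → False) ∧
      (u.1.val + u.2.val = v.1.val + v.2.val →
        u.1.val + v.2.val = v.1.val + u.2.val → False) := by
    intro u hne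
    have huv : ¬(u.1.val = v.1.val ∧ u.2.val = v.2.val) := by
      rintro ⟨h1, h2⟩
      exact hne (Prod.ext (Fin.ext h1) (Fin.ext h2))
    refine ⟨?_, ?_, ?_, ?_, ?_, ?_⟩ <;> intro h h' <;>
      first
        | exact huv ⟨congrArg Fin.val h, congrArg Fin.val h'⟩
        | (apply huv
           first
             | (have := congrArg Fin.val h; omega)
             | omega)
  have d12 : Disjoint F1 F2 := by
    rw [Finset.disjoint_left]
    rintro u hu hu'
    simp only [hF1, hF2, Finset.mem_erase, Finset.mem_filter, Finset.mem_univ, true_and] at hu hu'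
    exact (key u hu.1).1 hu.2 hu'.2
  have d13 : Disjoint F1 F3 := by
    rw [Finset.disjoint_left]
    rintro u hu hu'
    simp only [hF1, hF3, Finset.mem_erase, Finset.mem_filter, Finset.mem_univ, true_and] at hu hu'
    exact (key u hu.1).2.1 hu.2 hu'.2
  have d14 : Disjoint F1 F4 := by
    rw [Finset.disjoint_left]
    rintro u hu hu'
    simp only [hF1, hF4, Finset.mem_erase, Finset.mem_filter, Finset.mem_univ, true_and] at hu hu'
    exact (key u hu.1).2.2.1 hu.2 hu'.2
  have d23 : Disjoint F2 F3 := by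
    rw [Finset.disjoint_left]
    rintro u hu hu'
    simp only [hF2, hF3, Finset.mem_erase, Finset.mem_filter, Finset.mem_univ, true_and] at hu hu'
    exact (key u hu.1).2.2.2.1 hu.2 hu'.2
  have d24 : Disjoint F2 F4 := by
    rw [Finset.disjoint_left]
    rintro u hu hu'
    simp only [hF2, hF4, Finset.mem_erase, Finset.mem_filter, Finset.mem_univ, true_and] at hu hu'
    exact (key u hu.1).2.2.2.2.1 hu.2 hu'.2
  have d34 : Disjoint F3 F4 := by
    rw [Finset.disjoint_left]
    rintro u hu hu'
    simp only [hF3, hF4, Finset.mem_erase, Finset.mem_filter, Finset.mem_univ, true_and] at hu hu'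
    exact (key u hu.1).2.2.2.2.2 hu.2 hu'.2
  have hdeg : (queensGraph n).degree v = F1.card + F2.card + F3.card + F4.card := by
    rw [← SimpleGraph.card_neighborFinset_eq_degree, hN,
      Finset.card_union_of_disjoint, Finset.card_union_of_disjoint,
      Finset.card_union_of_disjoint d12]
    · exact Finset.disjoint_union_left.mpr ⟨d13, d23⟩
    · exact Finset.disjoint_union_left.mpr ⟨Finset.disjoint_union_left.mpr ⟨d14, d24⟩, d34⟩
  rw [hdeg, c1, c2, c3, c4]
  refine ⟨by omega, fun he => ?_, fun ho => ?_⟩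
  · obtain ⟨k, hk⟩ := he
    omega
  · obtain ⟨k, hk⟩ := ho
    omega
end

section
/- The clique number of the n-Queens' graph satisfies: ω(Q(2)) = 4, ω(Q(3)) = 5, ω(Q(4)) = 5, and ω(Q(n)) = n for every n ≥ 5. -/
set_option maxHeartbeats 1000000

lemma off_reduce (x y z t : ℤ) (ht : t ≠ 0)
    (hxy : x ≠ y) (hxz : x ≠ z) (hyz : y ≠ z) (hsum : x + y + z = 0)
    (h1 : t = x ∨ t = y ∨ t = z) (h2 : -t = x ∨ -t = y ∨ -t = z) :
    (z = 0 ∧ (t = x ∨ t = y)) ∨ (y = 0 ∧ (t = x ∨ t = z)) ∨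
      (x = 0 ∧ (t = y ∨ t = z)) := by omega

lemma off_three (x y z t1 t2 t3 : ℤ)
    (hxy : x ≠ y) (hxz : x ≠ z) (hyz : y ≠ z)
    (d12 : t1 ≠ t2) (d13 : t1 ≠ t3) (d23 : t2 ≠ t3)
    (H1 : (z = 0 ∧ (t1 = x ∨ t1 = y)) ∨ (y = 0 ∧ (t1 = x ∨ t1 = z)) ∨
      (x = 0 ∧ (t1 = y ∨ t1 = z)))
    (H2 : (z = 0 ∧ (t2 = x ∨ t2 = y)) ∨ (y = 0 ∧ (t2 = x ∨ t2 = z)) ∨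
      (x = 0 ∧ (t2 = y ∨ t2 = z)))
    (H3 : (z = 0 ∧ (t3 = x ∨ t3 = y)) ∨ (y = 0 ∧ (t3 = x ∨ t3 = z)) ∨
      (x = 0 ∧ (t3 = y ∨ t3 = z))) : False := by omega

/-- normalized facts for an off point -/
lemma off_F (R a b c v1 v2 : ℤ) (hab : a ≠ b) (hac : a ≠ c) (hbc : b ≠ c)
    (hv : v1 ≠ R)
    (Ha : v2 = a ∨ v1 + v2 = R + a ∨ v1 - v2 = R - a)
    (Hb : v2 = b ∨ v1 + v2 = R + b ∨ v1 - v2 = R - b)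
    (Hc : v2 = c ∨ v1 + v2 = R + c ∨ v1 - v2 = R - c) :
    3 * v2 = a + b + c ∧
      (v1 - R = (a - v2) ∨ v1 - R = (b - v2) ∨ v1 - R = (c - v2)) ∧
      (-(v1 - R) = (a - v2) ∨ -(v1 - R) = (b - v2) ∨ -(v1 - R) = (c - v2)) := by
  omega

lemma three_mul_inj {s u v : ℤ} (h1 : 3 * u = s) (h2 : 3 * v = s) : u = v := by omega

lemma sub_ne (a b m : ℤ) (h : a ≠ b) : a - m ≠ b - m := fun h' => h (by omega)

lemma sum_zero (a b c m : ℤ) (h : 3 * m = a + b + c) :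
    (a - m) + (b - m) + (c - m) = 0 := by omega

lemma memb_cast {a b c m m' t : ℤ} (hm : m = m')
    (h : t = a - m ∨ t = b - m ∨ t = c - m) :
    t = a - m' ∨ t = b - m' ∨ t = c - m' := hm ▸ h

lemma off_contra (R a b c : ℤ) (hab : a ≠ b) (hac : a ≠ c) (hbc : b ≠ c)
    (w1 w2 w3 : ℤ × ℤ)
    (h1 : w1.1 ≠ R) (h2 : w2.1 ≠ R) (h3 : w3.1 ≠ R)
    (A1 : w1.2 = a ∨ w1.1 + w1.2 = R + a ∨ w1.1 - w1.2 = R - a)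
    (B1 : w1.2 = b ∨ w1.1 + w1.2 = R + b ∨ w1.1 - w1.2 = R - b)
    (C1 : w1.2 = c ∨ w1.1 + w1.2 = R + c ∨ w1.1 - w1.2 = R - c)
    (A2 : w2.2 = a ∨ w2.1 + w2.2 = R + a ∨ w2.1 - w2.2 = R - a)
    (B2 : w2.2 = b ∨ w2.1 + w2.2 = R + b ∨ w2.1 - w2.2 = R - b)
    (C2 : w2.2 = c ∨ w2.1 + w2.2 = R + c ∨ w2.1 - w2.2 = R - c)
    (A3 : w3.2 = a ∨ w3.1 + w3.2 = R + a ∨ w3.1 - w3.2 = R - a)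
    (B3 : w3.2 = b ∨ w3.1 + w3.2 = R + b ∨ w3.1 - w3.2 = R - b)
    (C3 : w3.2 = c ∨ w3.1 + w3.2 = R + c ∨ w3.1 - w3.2 = R - c)
    (d12 : w1 ≠ w2) (d13 : w1 ≠ w3) (d23 : w2 ≠ w3) : False := by
  obtain ⟨m1, dp1, dm1⟩ := off_F R a b c w1.1 w1.2 hab hac hbc h1 A1 B1 C1
  obtain ⟨m2, dp2, dm2⟩ := off_F R a b c w2.1 w2.2 hab hac hbc h2 A2 B2 C2
  obtain ⟨m3, dp3, dm3⟩ := off_F R a b c w3.1 w3.2 hab hac hbc h3 A3 B3 C3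
  clear A1 B1 C1 A2 B2 C2 A3 B3 C3
  have hm21 : w2.2 = w1.2 := three_mul_inj m2 m1
  have hm31 : w3.2 = w1.2 := three_mul_inj m3 m1
  have e12 : w1.1 - R ≠ w2.1 - R := fun h =>
    d12 (Prod.ext (sub_left_inj.mp h) hm21.symm)
  have e13 : w1.1 - R ≠ w3.1 - R := fun h =>
    d13 (Prod.ext (sub_left_inj.mp h) hm31.symm)
  have e23 : w2.1 - R ≠ w3.1 - R := fun h =>
    d23 (Prod.ext (sub_left_inj.mp h) (hm21.trans hm31.symm))
  have H1 := off_reduce (a - w1.2) (b - w1.2) (c - w1.2) (w1.1 - R)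
    (sub_ne_zero_of_ne h1) (sub_ne a b _ hab) (sub_ne a c _ hac) (sub_ne b c _ hbc)
    (sum_zero a b c _ m1) dp1 dm1
  have H2 := off_reduce (a - w1.2) (b - w1.2) (c - w1.2) (w2.1 - R)
    (sub_ne_zero_of_ne h2) (sub_ne a b _ hab) (sub_ne a c _ hac) (sub_ne b c _ hbc)
    (sum_zero a b c _ m1) (memb_cast hm21 dp2) (memb_cast hm21 dm2)
  have H3 := off_reduce (a - w1.2) (b - w1.2) (c - w1.2) (w3.1 - R)
    (sub_ne_zero_of_ne h3) (sub_ne a b _ hab) (sub_ne a c _ hac) (sub_ne b c _ hbc)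
    (sum_zero a b c _ m1) (memb_cast hm31 dp3) (memb_cast hm31 dm3)
  exact off_three _ _ _ _ _ _ (sub_ne a b _ hab) (sub_ne a c _ hac) (sub_ne b c _ hbc)
    e12 e13 e23 H1 H2 H3

lemma on_contra (R a b c d : ℤ) (hab : a ≠ b) (hac : a ≠ c) (had : a ≠ d)
    (hbc : b ≠ c) (hbd : b ≠ d) (hcd : c ≠ d)
    (w1 w2 : ℤ) (hw : w1 ≠ R)
    (Ha : w2 = a ∨ w1 + w2 = R + a ∨ w1 - w2 = R - a)
    (Hb : w2 = b ∨ w1 + w2 = R + b ∨ w1 - w2 = R - b)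
    (Hc : w2 = c ∨ w1 + w2 = R + c ∨ w1 - w2 = R - c)
    (Hd : w2 = d ∨ w1 + w2 = R + d ∨ w1 - w2 = R - d) : False := by omega

lemma ne_iff' {u v : ℤ × ℤ} : u ≠ v ↔ (u.1 ≠ v.1 ∨ u.2 ≠ v.2) := by
  constructor
  · intro h; by_contra hc; push_neg at hc; exact h (Prod.ext hc.1 hc.2)
  · rintro (h | h) rfl <;> simp at h

def IAdj (u v : ℤ × ℤ) : Prop :=
  u ≠ v ∧ (u.1 = v.1 ∨ u.2 = v.2 ∨ u.1 + u.2 = v.1 + v.2 ∨ u.1 - u.2 = v.1 - v.2)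

lemma row_key (S : Finset (ℤ × ℤ)) (hS : (S : Set (ℤ × ℤ)).Pairwise IAdj)
    (p q r : ℤ × ℤ) (hp : p ∈ S) (hq : q ∈ S) (hr : r ∈ S)
    (hpq : p ≠ q) (hpr : p ≠ r) (hqr : q ≠ r)
    (h1 : p.1 = q.1) (h2 : p.1 = r.1)
    (w : ℤ × ℤ) (hw : w ∈ S) (hwR : w.1 ≠ p.1) : S.card ≤ 5 := by
  set R := p.1 with hR
  have adj : ∀ x ∈ S, ∀ y ∈ S, x.1 ≠ R → y.1 = R →
      (x.2 = y.2 ∨ x.1 + x.2 = y.1 + y.2 ∨ x.1 - x.2 = y.1 - y.2) := by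
    intro x hx y hy hxR hyR
    have hxy : x ≠ y := ne_iff'.mpr (Or.inl (hyR ▸ hxR))
    rcases hS hx hy hxy with ⟨-, h | h | h | h⟩
    · exact absurd (h.trans hyR) hxR
    · exact Or.inl h
    · exact Or.inr (Or.inl h)
    · exact Or.inr (Or.inr h)
  -- normalized adjacency: y on the row given by its column value
  have adj' : ∀ x ∈ S, ∀ y ∈ S, x.1 ≠ R → y.1 = R →
      (x.2 = y.2 ∨ x.1 + x.2 = R + y.2 ∨ x.1 - x.2 = R - y.2) := by
    intro x hx y hy hxR hyR
    rcases adj x hx y hy hxR hyR with h | h | h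
    · exact Or.inl h
    · exact Or.inr (Or.inl (by rw [h, hyR]))
    · exact Or.inr (Or.inr (by rw [h, hyR]))
  have hab : p.2 ≠ q.2 := fun h => hpq (Prod.ext h1 h)
  have hac : p.2 ≠ r.2 := fun h => hpr (Prod.ext h2 h)
  have hbc : q.2 ≠ r.2 := fun h => hqr (Prod.ext (h1 ▸ h2 : q.1 = r.1) h)
  classical
  have hsplit := Finset.card_filter_add_card_filter_not
    (s := S) (p := fun x => x.1 = R)
  have hon : (S.filter (fun x => x.1 = R)).card ≤ 3 := by
    by_contra hcon
    push_neg at hcon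
    obtain ⟨t, ht, htc⟩ := Finset.exists_subset_card_eq hcon
    obtain ⟨x, hx⟩ := Finset.card_pos.mp (by omega : 0 < t.card)
    have h3 : (t.erase x).card = 3 := by
      rw [Finset.card_erase_of_mem hx]; omega
    obtain ⟨y, z, u, hyz, hyu, hzu, he⟩ := Finset.card_eq_three.mp h3
    have hy : y ∈ t.erase x := by rw [he]; simp
    have hz : z ∈ t.erase x := by rw [he]; simp
    have hu : u ∈ t.erase x := by rw [he]; simp
    have hxy : x ≠ y := fun h => (Finset.ne_of_mem_erase hy) h.symm
    have hxz : x ≠ z := fun h => (Finset.ne_of_mem_erase hz) h.symm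
    have hxu : x ≠ u := fun h => (Finset.ne_of_mem_erase hu) h.symm
    have mem : ∀ v ∈ t, v ∈ S ∧ v.1 = R := by
      intro v hv
      have := ht hv
      simp only [Finset.mem_filter] at this
      exact this
    obtain ⟨hxS, hxR⟩ := mem x hx
    obtain ⟨hyS, hyR⟩ := mem y (Finset.mem_of_mem_erase hy)
    obtain ⟨hzS, hzR⟩ := mem z (Finset.mem_of_mem_erase hz)
    obtain ⟨huS, huR⟩ := mem u (Finset.mem_of_mem_erase hu)
    have cxy : x.2 ≠ y.2 := fun h => hxy (Prod.ext (hxR.trans hyR.symm) h)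
    have cxz : x.2 ≠ z.2 := fun h => hxz (Prod.ext (hxR.trans hzR.symm) h)
    have cxu : x.2 ≠ u.2 := fun h => hxu (Prod.ext (hxR.trans huR.symm) h)
    have cyz : y.2 ≠ z.2 := fun h => hyz (Prod.ext (hyR.trans hzR.symm) h)
    have cyu : y.2 ≠ u.2 := fun h => hyu (Prod.ext (hyR.trans huR.symm) h)
    have czu : z.2 ≠ u.2 := fun h => hzu (Prod.ext (hzR.trans huR.symm) h)
    exact on_contra R x.2 y.2 z.2 u.2 cxy cxz cxu cyz cyu czu w.1 w.2 hwR
      (adj' w hw x hxS hwR hxR) (adj' w hw y hyS hwR hyR)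
      (adj' w hw z hzS hwR hzR) (adj' w hw u huS hwR huR)
  have hoff : (S.filter (fun x => ¬ x.1 = R)).card ≤ 2 := by
    by_contra hcon
    push_neg at hcon
    obtain ⟨t, ht, htc⟩ := Finset.exists_subset_card_eq hcon
    obtain ⟨w1, w2, w3, d12, d13, d23, he⟩ := Finset.card_eq_three.mp htc
    have mem : ∀ v ∈ t, v ∈ S ∧ ¬ v.1 = R := by
      intro v hv
      have := ht hv
      simp only [Finset.mem_filter] at this
      exact this
    obtain ⟨hw1S, hw1R⟩ := mem w1 (by rw [he]; simp)
    obtain ⟨hw2S, hw2R⟩ := mem w2 (by rw [he]; simp)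
    obtain ⟨hw3S, hw3R⟩ := mem w3 (by rw [he]; simp)
    exact off_contra R p.2 q.2 r.2 hab hac hbc w1 w2 w3 hw1R hw2R hw3R
      (adj' w1 hw1S p hp hw1R rfl) (adj' w1 hw1S q hq hw1R h1.symm)
      (adj' w1 hw1S r hr hw1R h2.symm)
      (adj' w2 hw2S p hp hw2R rfl) (adj' w2 hw2S q hq hw2R h1.symm)
      (adj' w2 hw2S r hr hw2R h2.symm)
      (adj' w3 hw3S p hp hw3R rfl) (adj' w3 hw3S q hq hw3R h1.symm)
      (adj' w3 hw3S r hr hw3R h2.symm)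
      d12 d13 d23
  omega

section Transfer

/-- a linear automorphism-ish transfer: any injective map preserving `IAdj`. -/
lemma card_le_of_image (S : Finset (ℤ × ℤ)) (f : ℤ × ℤ → ℤ × ℤ)
    (hf : Function.Injective f)
    (hS : (S : Set (ℤ × ℤ)).Pairwise IAdj)
    (hpres : ∀ u v, IAdj u v → IAdj (f u) (f v))
    (p q r : ℤ × ℤ) (hp : p ∈ S) (hq : q ∈ S) (hr : r ∈ S)
    (hpq : p ≠ q) (hpr : p ≠ r) (hqr : q ≠ r)
    (h1 : (f p).1 = (f q).1) (h2 : (f p).1 = (f r).1)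
    (w : ℤ × ℤ) (hw : w ∈ S) (hwR : (f w).1 ≠ (f p).1) : S.card ≤ 5 := by
  classical
  have hcard : (S.image f).card = S.card := Finset.card_image_of_injective S hf
  rw [← hcard]
  apply row_key (S.image f) ?_ (f p) (f q) (f r)
    (Finset.mem_image_of_mem f hp) (Finset.mem_image_of_mem f hq)
    (Finset.mem_image_of_mem f hr)
    (fun h => hpq (hf h)) (fun h => hpr (hf h)) (fun h => hqr (hf h))
    h1 h2 (f w) (Finset.mem_image_of_mem f hw) hwR
  intro x hx y hy hxy
  simp only [Finset.coe_image, Set.mem_image, Finset.mem_coe] at hx hy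
  obtain ⟨u, hu, rfl⟩ := hx
  obtain ⟨v, hv, rfl⟩ := hy
  exact hpres u v (hS hu hv (fun h => hxy (congrArg f h)))

/-- The general key lemma: three collinear points (any of the four directions)
plus a point off that line forces the clique to have at most 5 points. -/
lemma line_key (S : Finset (ℤ × ℤ)) (hS : (S : Set (ℤ × ℤ)).Pairwise IAdj)
    (p q r : ℤ × ℤ) (hp : p ∈ S) (hq : q ∈ S) (hr : r ∈ S)
    (hpq : p ≠ q) (hpr : p ≠ r) (hqr : q ≠ r) (w : ℤ × ℤ) (hw : w ∈ S)
    (hline :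
      (p.1 = q.1 ∧ p.1 = r.1 ∧ w.1 ≠ p.1) ∨
      (p.2 = q.2 ∧ p.2 = r.2 ∧ w.2 ≠ p.2) ∨
      (p.1 + p.2 = q.1 + q.2 ∧ p.1 + p.2 = r.1 + r.2 ∧ w.1 + w.2 ≠ p.1 + p.2) ∨
      (p.1 - p.2 = q.1 - q.2 ∧ p.1 - p.2 = r.1 - r.2 ∧ w.1 - w.2 ≠ p.1 - p.2)) :
    S.card ≤ 5 := by
  rcases hline with ⟨e1, e2, e3⟩ | ⟨e1, e2, e3⟩ | ⟨e1, e2, e3⟩ | ⟨e1, e2, e3⟩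
  · exact row_key S hS p q r hp hq hr hpq hpr hqr e1 e2 w hw e3
  · refine card_le_of_image S (fun u => (u.2, u.1)) ?_ hS ?_ p q r hp hq hr
      hpq hpr hqr e1 e2 w hw e3
    · intro u v h
      exact Prod.ext (congrArg Prod.snd h) (congrArg Prod.fst h)
    · rintro u v ⟨hne, h⟩
      refine ⟨fun h' => hne (Prod.ext (congrArg Prod.snd h') (congrArg Prod.fst h')), ?_⟩
      dsimp only
      omega
  · refine card_le_of_image S (fun u => (u.1 + u.2, u.1 - u.2)) ?_ hS ?_ p q r hp hq hr
      hpq hpr hqr e1 e2 w hw e3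
    · intro u v h
      have h1 := congrArg Prod.fst h
      have h2 := congrArg Prod.snd h
      dsimp only at h1 h2
      rw [ne_iff'] at *
      exact Prod.ext (by omega) (by omega)
    · rintro u v ⟨hne, h⟩
      rw [ne_iff'] at hne
      refine ⟨?_, ?_⟩
      · rw [ne_iff']; dsimp only; omega
      · dsimp only; omega
  · refine card_le_of_image S (fun u => (u.1 - u.2, u.1 + u.2)) ?_ hS ?_ p q r hp hq hr
      hpq hpr hqr e1 e2 w hw e3
    · intro u v h
      have h1 := congrArg Prod.fst h
      have h2 := congrArg Prod.snd h
      dsimp only at h1 h2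
      exact Prod.ext (by omega) (by omega)
    · rintro u v ⟨hne, h⟩
      rw [ne_iff'] at hne
      refine ⟨?_, ?_⟩
      · rw [ne_iff']; dsimp only; omega
      · dsimp only; omega

end Transfer

/-- Main ℤ-level lemma: a queens clique is small or collinear. -/
lemma clique_classify (S : Finset (ℤ × ℤ)) (hS : (S : Set (ℤ × ℤ)).Pairwise IAdj) :
    S.card ≤ 5 ∨
      (∃ c, ∀ u ∈ S, u.1 = c) ∨ (∃ c, ∀ u ∈ S, u.2 = c) ∨
      (∃ c, ∀ u ∈ S, u.1 + u.2 = c) ∨ (∃ c, ∀ u ∈ S, u.1 - u.2 = c) := by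
  classical
  by_cases hbig : S.card ≤ 5
  · exact Or.inl hbig
  push_neg at hbig
  obtain ⟨p, hp⟩ := Finset.card_pos.mp (by omega : 0 < S.card)
  -- pigeonhole: two other points in the same direction class w.r.t. p
  have hcard : 4 < (S.erase p).card := by
    rw [Finset.card_erase_of_mem hp]; omega
  have hmaps : ∀ x ∈ S.erase p, (if x.1 = p.1 then (0 : Fin 4)
      else if x.2 = p.2 then 1 else if x.1 + x.2 = p.1 + p.2 then 2 else 3)
      ∈ (Finset.univ : Finset (Fin 4)) := fun _ _ => Finset.mem_univ _
  obtain ⟨q, hq, r, hr, hqr, hfqr⟩ :=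
    Finset.exists_ne_map_eq_of_card_lt_of_maps_to (by simpa using hcard) hmaps
  have hqS : q ∈ S := Finset.mem_of_mem_erase hq
  have hrS : r ∈ S := Finset.mem_of_mem_erase hr
  have hpq : p ≠ q := fun h => (Finset.ne_of_mem_erase hq) h.symm
  have hpr : p ≠ r := fun h => (Finset.ne_of_mem_erase hr) h.symm
  -- the adjacency between q,p and r,p
  have aq := hS hqS hp (Ne.symm hpq)
  have ar := hS hrS hp (Ne.symm hpr)
  -- derive a common line through p, q, r
  have hline : (p.1 = q.1 ∧ p.1 = r.1) ∨ (p.2 = q.2 ∧ p.2 = r.2) ∨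
      (p.1 + p.2 = q.1 + q.2 ∧ p.1 + p.2 = r.1 + r.2) ∨
      (p.1 - p.2 = q.1 - q.2 ∧ p.1 - p.2 = r.1 - r.2) := by
    by_cases c1q : q.1 = p.1 <;> by_cases c1r : r.1 = p.1 <;>
      by_cases c2q : q.2 = p.2 <;> by_cases c2r : r.2 = p.2 <;>
      by_cases c3q : q.1 + q.2 = p.1 + p.2 <;> by_cases c3r : r.1 + r.2 = p.1 + p.2 <;>
      simp only [c1q, c1r, c2q, c2r, c3q, c3r, if_true, if_false, if_pos, if_neg,
        not_false_iff] at hfqr <;>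
      first
        | omega
        | (obtain ⟨-, h4 | h4 | h4 | h4⟩ := aq <;> obtain ⟨-, h5 | h5 | h5 | h5⟩ := ar <;> omega)
  -- either everything is on this line, or apply `line_key`
  rcases hline with ⟨e1, e2⟩ | ⟨e1, e2⟩ | ⟨e1, e2⟩ | ⟨e1, e2⟩
  · by_cases hall : ∀ u ∈ S, u.1 = p.1
    · exact Or.inr (Or.inl ⟨p.1, hall⟩)
    · push_neg at hall
      obtain ⟨w, hw, hwp⟩ := hall
      exact Or.inl (line_key S hS p q r hp hqS hrS hpq hpr hqr w hw
        (Or.inl ⟨e1, e2, hwp⟩))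
  · by_cases hall : ∀ u ∈ S, u.2 = p.2
    · exact Or.inr (Or.inr (Or.inl ⟨p.2, hall⟩))
    · push_neg at hall
      obtain ⟨w, hw, hwp⟩ := hall
      exact Or.inl (line_key S hS p q r hp hqS hrS hpq hpr hqr w hw
        (Or.inr (Or.inl ⟨e1, e2, hwp⟩)))
  · by_cases hall : ∀ u ∈ S, u.1 + u.2 = p.1 + p.2
    · exact Or.inr (Or.inr (Or.inr (Or.inl ⟨p.1 + p.2, hall⟩)))
    · push_neg at hall
      obtain ⟨w, hw, hwp⟩ := hall
      exact Or.inl (line_key S hS p q r hp hqS hrS hpq hpr hqr w hw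
        (Or.inr (Or.inr (Or.inl ⟨e1, e2, hwp⟩))))
  · by_cases hall : ∀ u ∈ S, u.1 - u.2 = p.1 - p.2
    · exact Or.inr (Or.inr (Or.inr (Or.inr ⟨p.1 - p.2, hall⟩)))
    · push_neg at hall
      obtain ⟨w, hw, hwp⟩ := hall
      exact Or.inl (line_key S hS p q r hp hqS hrS hpq hpr hqr w hw
        (Or.inr (Or.inr (Or.inr ⟨e1, e2, hwp⟩))))




section FinLevel

/-- the embedding of the board into `ℤ × ℤ` -/
def emb {n : ℕ} (u : Fin n × Fin n) : ℤ × ℤ := ((u.1 : ℤ), (u.2 : ℤ))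

lemma emb_inj {n : ℕ} : Function.Injective (emb (n := n)) := by
  intro u v h
  have h1 := congrArg Prod.fst h
  have h2 := congrArg Prod.snd h
  simp only [emb] at h1 h2
  exact Prod.ext (Fin.ext (by exact_mod_cast h1)) (Fin.ext (by exact_mod_cast h2))

lemma queens_clique_card_le {n : ℕ} (s : Finset (Fin n × Fin n))
    (h : (queensGraph n).IsClique s) : s.card ≤ n ∨ s.card ≤ 5 := by
  classical
  set S : Finset (ℤ × ℤ) := s.image emb with hSdef
  have hcard : S.card = s.card := Finset.card_image_of_injective s emb_inj
  have hpair : (S : Set (ℤ × ℤ)).Pairwise IAdj := by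
    intro x hx y hy hxy
    simp only [hSdef, Finset.coe_image, Set.mem_image, Finset.mem_coe] at hx hy
    obtain ⟨u, hu, rfl⟩ := hx
    obtain ⟨v, hv, rfl⟩ := hy
    have huv : u ≠ v := fun h' => hxy (congrArg emb h')
    obtain ⟨-, hd⟩ := h hu hv huv
    refine ⟨hxy, ?_⟩
    simp only [emb]
    rcases hd with h' | h' | h' | h'
    · exact Or.inl (by exact_mod_cast congrArg Fin.val h')
    · exact Or.inr (Or.inl (by exact_mod_cast congrArg Fin.val h'))
    · refine Or.inr (Or.inr (Or.inl (by exact_mod_cast h')))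
    · refine Or.inr (Or.inr (Or.inr (by omega)))
  have hmem : ∀ u ∈ s, emb u ∈ S := fun u hu => Finset.mem_image_of_mem emb hu
  rcases clique_classify S hpair with h5 | ⟨c, hc⟩ | ⟨c, hc⟩ | ⟨c, hc⟩ | ⟨c, hc⟩
  · right; omega
  · left
    calc s.card ≤ (Finset.univ : Finset (Fin n)).card := by
          apply Finset.card_le_card_of_injOn (fun u => u.2) (fun _ _ => Finset.mem_univ _)
          intro u hu v hv huv
          have hu' := hc _ (hmem u hu)
          have hv' := hc _ (hmem v hv)
          simp only [emb] at hu' hv'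
          exact Prod.ext (Fin.ext (by omega)) huv
      _ = n := by simp
  · left
    calc s.card ≤ (Finset.univ : Finset (Fin n)).card := by
          apply Finset.card_le_card_of_injOn (fun u => u.1) (fun _ _ => Finset.mem_univ _)
          intro u hu v hv huv
          have hu' := hc _ (hmem u hu)
          have hv' := hc _ (hmem v hv)
          simp only [emb] at hu' hv'
          exact Prod.ext huv (Fin.ext (by omega))
      _ = n := by simp
  · left
    calc s.card ≤ (Finset.univ : Finset (Fin n)).card := by
          apply Finset.card_le_card_of_injOn (fun u => u.1) (fun _ _ => Finset.mem_univ _)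
          intro u hu v hv huv
          have hu' := hc _ (hmem u hu)
          have hv' := hc _ (hmem v hv)
          simp only [emb] at hu' hv'
          have : (u.1 : ℤ) = (v.1 : ℤ) := by exact_mod_cast congrArg Fin.val huv
          exact Prod.ext huv (Fin.ext (by omega))
      _ = n := by simp
  · left
    calc s.card ≤ (Finset.univ : Finset (Fin n)).card := by
          apply Finset.card_le_card_of_injOn (fun u => u.1) (fun _ _ => Finset.mem_univ _)
          intro u hu v hv huv
          have hu' := hc _ (hmem u hu)
          have hv' := hc _ (hmem v hv)
          simp only [emb] at hu' hv'
          have : (u.1 : ℤ) = (v.1 : ℤ) := by exact_mod_cast congrArg Fin.val huv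
          exact Prod.ext huv (Fin.ext (by omega))
      _ = n := by simp

end FinLevel

section Final

lemma cliqueNum_eq_of {α : Type*} [Fintype α] [DecidableEq α] (G : SimpleGraph α)
    (k : ℕ) (t : Finset α) (ht : G.IsClique t) (htc : t.card = k)
    (hub : ∀ s : Finset α, G.IsClique s → s.card ≤ k) : G.cliqueNum = k := by
  apply le_antisymm
  · obtain ⟨s, hs⟩ := G.exists_isNClique_cliqueNum
    rw [← hs.card_eq]
    exact hub s hs.isClique
  · rw [← htc]
    exact SimpleGraph.IsClique.card_le_cliqueNum (tc := ht)

end Final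


/-- `ω(Q(2)) = 4`, `ω(Q(3)) = ω(Q(4)) = 5` and `ω(Q(n)) = n` for `n ≥ 5`. -/
theorem queens_cliqueNum :
    (queensGraph 2).cliqueNum = 4 ∧ (queensGraph 3).cliqueNum = 5 ∧
      (queensGraph 4).cliqueNum = 5 ∧
      ∀ n : ℕ, 5 ≤ n → (queensGraph n).cliqueNum = n := by
  refine ⟨?_, ?_, ?_, ?_⟩
  · refine cliqueNum_eq_of _ 4 Finset.univ (by decide) (by decide) ?_
    intro s hs
    exact le_trans (Finset.card_le_univ s) (by decide)
  · refine cliqueNum_eq_of _ 5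
      {((0 : Fin 3), (0 : Fin 3)), (0, 2), (1, 1), (2, 0), (2, 2)}
      (by decide) (by decide) ?_
    intro s hs
    rcases queens_clique_card_le s hs with h | h <;> omega
  · refine cliqueNum_eq_of _ 5
      {((0 : Fin 4), (0 : Fin 4)), (0, 2), (1, 1), (2, 0), (2, 2)}
      (by decide) (by decide) ?_
    intro s hs
    rcases queens_clique_card_le s hs with h | h <;> omega
  · intro n hn
    refine cliqueNum_eq_of _ n
      (Finset.univ.image (fun j : Fin n => ((⟨0, by omega⟩ : Fin n), j))) ?_ ?_ ?_
    · intro x hx y hy hne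
      simp only [Finset.coe_image, Set.mem_image, Finset.coe_univ, Set.mem_univ,
        true_and, Set.image_univ, Set.mem_range] at hx hy
      obtain ⟨j, rfl⟩ := hx
      obtain ⟨j', rfl⟩ := hy
      exact ⟨hne, Or.inl rfl⟩
    · rw [Finset.card_image_of_injective _ (fun a b h => congrArg Prod.snd h),
        Finset.card_univ, Fintype.card_fin]
    · intro s hs
      rcases queens_clique_card_le s hs with h | h <;> omega
end

section
/- For every n ≥ 5: χ(Q(n)) = n when n ≡ 1 or 5 (mod 6); χ(Q(n)) ∈ {n, n+1} when n ≡ 0 or 4 (mod 6); χ(Q(n)) ∈ {n, n+1, n+2, n+3} when n ≡ 2 (mod 6); and χ(Q(n)) ∈ {n, n+1, n+2} when n ≡ 3 (mod 6). -/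
open SimpleGraph

lemma fin_eq_of_zmod {m : ℕ} (j q : Fin m) (h : (j.val : ZMod m) = (q.val : ZMod m)) :
    j = q := by
  have := congrArg ZMod.val h
  rw [ZMod.val_natCast_of_lt j.isLt, ZMod.val_natCast_of_lt q.isLt] at this
  exact Fin.ext this

/-- `Q(m)` is `m`-colorable when `m ≡ 1, 5 (mod 6)`, via `(i, j) ↦ i + 2j mod m`. -/
lemma queensGraph_colorable (m : ℕ) (hm : m % 6 = 1 ∨ m % 6 = 5) :
    (queensGraph m).Colorable m := by
  haveI : NeZero m := ⟨by omega⟩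
  have h2 : IsUnit (2 : ZMod m) := by
    have h := (ZMod.isUnit_iff_coprime 2 m).2 ?_
    · exact_mod_cast h
    · rw [Nat.Prime.coprime_iff_not_dvd Nat.prime_two]
      intro h; have := Nat.mod_eq_zero_of_dvd h; omega
  have h3 : IsUnit (3 : ZMod m) := by
    have h := (ZMod.isUnit_iff_coprime 3 m).2 ?_
    · exact_mod_cast h
    · rw [Nat.Prime.coprime_iff_not_dvd Nat.prime_three]
      intro h; have := Nat.mod_eq_zero_of_dvd h; omega
  have C : (queensGraph m).Coloring (ZMod m) := by
    refine Coloring.mk (fun v => (v.1.val : ZMod m) + 2 * (v.2.val : ZMod m)) ?_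
    rintro u v ⟨hne, h⟩ hc
    apply hne
    obtain ⟨i, j⟩ := u
    obtain ⟨p, q⟩ := v
    dsimp only at hc h ⊢
    rcases h with h | h | h | h
    · subst h
      have hjq : (2 : ZMod m) * (j.val : ZMod m) = 2 * (q.val : ZMod m) := by
        linear_combination hc
      have : (j.val : ZMod m) = (q.val : ZMod m) := h2.mul_left_cancel hjq
      rw [fin_eq_of_zmod j q this]
    · subst h
      have : (i.val : ZMod m) = (p.val : ZMod m) := by linear_combination hc
      rw [fin_eq_of_zmod i p this]
    · have hd : ((i.val + j.val : ℕ) : ZMod m) = ((p.val + q.val : ℕ) : ZMod m) := by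
        rw [h]
      push_cast at hd
      have hJ : (j.val : ZMod m) = (q.val : ZMod m) := by linear_combination hc - hd
      have hI : (i.val : ZMod m) = (p.val : ZMod m) := by linear_combination hd - hJ
      rw [fin_eq_of_zmod i p hI, fin_eq_of_zmod j q hJ]
    · have hd : ((i.val + q.val : ℕ) : ZMod m) = ((p.val + j.val : ℕ) : ZMod m) := by
        rw [h]
      push_cast at hd
      have h3J : (3 : ZMod m) * (j.val : ZMod m) = 3 * (q.val : ZMod m) := by
        linear_combination hc - hd
      have hJ : (j.val : ZMod m) = (q.val : ZMod m) := h3.mul_left_cancel h3J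
      have hI : (i.val : ZMod m) = (p.val : ZMod m) := by linear_combination hd + hJ
      rw [fin_eq_of_zmod i p hI, fin_eq_of_zmod j q hJ]
  have := C.colorable
  rwa [ZMod.card] at this

/-- Monotonicity: a `k`-coloring of `Q(m)` restricts to `Q(n)` for `n ≤ m`. -/
lemma queensGraph_colorable_mono {n m k : ℕ} (hnm : n ≤ m)
    (h : (queensGraph m).Colorable k) : (queensGraph n).Colorable k := by
  obtain ⟨C⟩ := h
  refine ⟨Coloring.mk (fun v => C (Fin.castLE hnm v.1, Fin.castLE hnm v.2)) ?_⟩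
  rintro u v ⟨hne, h⟩ hc
  refine C.valid ?_ hc
  refine ⟨?_, ?_⟩
  · intro he
    apply hne
    exact Prod.ext (Fin.castLE_injective hnm (congrArg Prod.fst he))
      (Fin.castLE_injective hnm (congrArg Prod.snd he))
  · rcases h with h | h | h | h
    · exact Or.inl (by simp [Fin.castLE, h])
    · exact Or.inr (Or.inl (by simp [Fin.castLE, h]))
    · exact Or.inr (Or.inr (Or.inl h))
    · exact Or.inr (Or.inr (Or.inr h))

/-- The first row is a clique, so `n ≤ χ(Q(n))`. -/
lemma queensGraph_chromatic_ge (n : ℕ) (hn : 0 < n) :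
    (n : ℕ∞) ≤ (queensGraph n).chromaticNumber := by
  haveI : NeZero n := ⟨hn.ne'⟩
  have hclique : (queensGraph n).IsClique
      ((Finset.univ.image (fun k : Fin n => ((0 : Fin n), k)) : Finset (Fin n × Fin n)) :
        Set (Fin n × Fin n)) := by
    rintro u hu v hv huv
    simp only [Finset.coe_image, Finset.coe_univ, Set.image_univ, Set.mem_range] at hu hv
    obtain ⟨a, rfl⟩ := hu
    obtain ⟨b, rfl⟩ := hv
    exact ⟨huv, Or.inl rfl⟩
  have hcard : (Finset.univ.image (fun k : Fin n => ((0 : Fin n), k))).card = n := by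
    rw [Finset.card_image_of_injective _ (fun a b hab => (Prod.ext_iff.1 hab).2)]
    simp
  have := hclique.card_le_chromaticNumber
  rwa [hcard] at this

lemma queensGraph_chromatic_le (n m : ℕ) (hnm : n ≤ m) (hm : m % 6 = 1 ∨ m % 6 = 5) :
    (queensGraph n).chromaticNumber ≤ (m : ℕ∞) :=
  (queensGraph_colorable_mono hnm (queensGraph_colorable m hm)).chromaticNumber_le

/-- the possible values of `χ(Q(n))` for `n ≥ 5`, according to the
residue of `n` modulo `6`. -/
theorem queens_chromatic_cases (n : ℕ) (hn : 5 ≤ n) :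
    ((n % 6 = 1 ∨ n % 6 = 5) → (queensGraph n).chromaticNumber = n) ∧
      ((n % 6 = 0 ∨ n % 6 = 4) →
        (queensGraph n).chromaticNumber = n ∨ (queensGraph n).chromaticNumber = (n : ℕ∞) + 1) ∧
      (n % 6 = 2 →
        (queensGraph n).chromaticNumber = n ∨ (queensGraph n).chromaticNumber = (n : ℕ∞) + 1 ∨
        (queensGraph n).chromaticNumber = (n : ℕ∞) + 2 ∨
        (queensGraph n).chromaticNumber = (n : ℕ∞) + 3) ∧
      (n % 6 = 3 →
        (queensGraph n).chromaticNumber = n ∨ (queensGraph n).chromaticNumber = (n : ℕ∞) + 1 ∨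
        (queensGraph n).chromaticNumber = (n : ℕ∞) + 2) := by
  have hge := queensGraph_chromatic_ge n (by omega)
  have key : ∀ k : ℕ, ((n + k) % 6 = 1 ∨ (n + k) % 6 = 5) →
      ∃ c : ℕ, (queensGraph n).chromaticNumber = (c : ℕ∞) ∧ n ≤ c ∧ c ≤ n + k := by
    intro k hk
    have hle := queensGraph_chromatic_le n (n + k) (Nat.le_add_right n k) hk
    have hne : (queensGraph n).chromaticNumber ≠ ⊤ :=
      (lt_of_le_of_lt hle (WithTop.coe_lt_top _)).ne
    lift (queensGraph n).chromaticNumber to ℕ using hne with c hc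
    refine ⟨c, rfl, ?_, ?_⟩
    · exact_mod_cast hge
    · exact_mod_cast hle
  refine ⟨?_, ?_, ?_, ?_⟩
  · intro h
    obtain ⟨c, hc, h1, h2⟩ := key 0 (by omega)
    rw [hc]; norm_cast; omega
  · intro h
    obtain ⟨c, hc, h1, h2⟩ := key 1 (by omega)
    rw [hc]
    have : c = n ∨ c = n + 1 := by omega
    rcases this with rfl | rfl
    · exact Or.inl rfl
    · right; push_cast; ring
  · intro h
    obtain ⟨c, hc, h1, h2⟩ := key 3 (by omega)
    rw [hc]
    have : c = n ∨ c = n + 1 ∨ c = n + 2 ∨ c = n + 3 := by omega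
    rcases this with rfl | rfl | rfl | rfl
    · exact Or.inl rfl
    · right; left; push_cast; ring
    · right; right; left; push_cast; ring
    · right; right; right; push_cast; ring
  · intro h
    obtain ⟨c, hc, h1, h2⟩ := key 2 (by omega)
    rw [hc]
    have : c = n ∨ c = n + 1 ∨ c = n + 2 := by omega
    rcases this with rfl | rfl | rfl
    · exact Or.inl rfl
    · right; left; push_cast; ring
    · right; right; push_cast; ring
end

section
/- Let G be a finite simple graph, let P = {E_i : i ∈ I} be an edge clique partition of G, for each vertex v let m_v(P) be the number of parts E_i whose associated clique V(G[E_i]) contains v, and let m = m_G(P) = max_v m_v(P). Then every real eigenvalue μ of the adjacency matrix of G satisfies μ ≥ −m. -/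
/-- An edge clique partition of `G`, presented as a finite family `P` of cliques
(each with at least two vertices, so that its edge set is nonempty) such that
every edge of `G` lies inside exactly one clique of `P`. -/
def IsEdgeCliquePartition {V : Type*} (G : SimpleGraph V) (P : Finset (Finset V)) : Prop :=
  (∀ c ∈ P, G.IsClique (c : Set V) ∧ 2 ≤ c.card) ∧
    ∀ e ∈ G.edgeSet, ∃! c, c ∈ P ∧ ∀ v, v ∈ e → v ∈ c

/-- The clique degree of a vertex `v` relative to an edge clique partition `P`:
the number of cliques of `P` containing `v`. -/
def cliqueDeg {V : Type*} [DecidableEq V] (P : Finset (Finset V)) (v : V) : ℕ :=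
  (P.filter fun c => v ∈ c).card

/-- The maximum clique degree of `G` relative to `P`. -/
def maxCliqueDeg {V : Type*} [Fintype V] [DecidableEq V] (P : Finset (Finset V)) : ℕ :=
  Finset.univ.sup fun v => cliqueDeg P v

open Finset Matrix

lemma adj_entry {V : Type*} [Fintype V] [DecidableEq V]
    (G : SimpleGraph V) [DecidableRel G.Adj] (P : Finset (Finset V))
    (hP : IsEdgeCliquePartition G P) (u v : V) :
    G.adjMatrix ℝ u v = ∑ c ∈ P, (if u ∈ c ∧ v ∈ c ∧ u ≠ v then (1:ℝ) else 0) := by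
  rw [SimpleGraph.adjMatrix_apply]
  by_cases h : G.Adj u v
  · obtain ⟨c₀, ⟨hc₀P, hc₀⟩, huniq⟩ := hP.2 s(u,v) (G.mem_edgeSet.mpr h)
    rw [if_pos h, Finset.sum_eq_single c₀]
    · rw [if_pos ⟨hc₀ u (by simp), hc₀ v (by simp), h.ne⟩]
    · intro b hb hbne
      rw [if_neg]
      rintro ⟨hub, hvb, -⟩
      exact hbne (huniq b ⟨hb, fun w hw => by rcases Sym2.mem_iff.mp hw with rfl | rfl <;> assumption⟩)
    · intro hc; exact absurd hc₀P hc
  · rw [if_neg h]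
    symm; apply Finset.sum_eq_zero
    intro c hc
    rw [if_neg]
    rintro ⟨huc, hvc, hne⟩
    exact h (((hP.1 c hc).1) huc hvc hne)

lemma clique_quad {V : Type*} [Fintype V] [DecidableEq V] (c : Finset V) (x : V → ℝ) :
    ∑ u, ∑ v, (if u ∈ c ∧ v ∈ c ∧ u ≠ v then (1:ℝ) else 0) * (x u * x v)
      = (∑ v ∈ c, x v)^2 - ∑ v ∈ c, (x v)^2 := by
  have key : ∀ u v : V, (if u ∈ c ∧ v ∈ c ∧ u ≠ v then (1:ℝ) else 0) * (x u * x v)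
      = (if u ∈ c then x u else 0) * (if v ∈ c then x v else 0)
        - (if u = v ∧ u ∈ c then x u * x v else 0) := by
    intro u v
    by_cases h3 : u = v
    · subst h3
      by_cases h1 : u ∈ c <;> simp [h1]
    · by_cases h1 : u ∈ c <;> by_cases h2 : v ∈ c <;> simp [h1, h2, h3]
  simp only [key, Finset.sum_sub_distrib]
  congr 1
  · rw [← Finset.sum_mul_sum]
    simp only [Finset.sum_ite_mem, Finset.univ_inter]
    rw [sq]
  · rw [Finset.sum_comm]
    have : ∀ v : V, ∑ u, (if u = v ∧ u ∈ c then x u * x v else 0)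
        = if v ∈ c then (x v)^2 else 0 := by
      intro v
      rw [Finset.sum_eq_single v]
      · by_cases hv : v ∈ c <;> simp [hv, sq]
      · intro b _ hb; simp [hb]
      · simp
    simp only [this, Finset.sum_ite_mem, Finset.univ_inter]


/-- every real eigenvalue `μ` of the adjacency matrix of `G`
satisfies `μ ≥ -m`, where `m` is the maximum clique degree of `G` relative to an
edge clique partition `P`. -/
theorem eigenvalue_ge_neg_maxCliqueDeg {V : Type*} [Fintype V] [DecidableEq V]
    (G : SimpleGraph V) [DecidableRel G.Adj] (P : Finset (Finset V))
    (hP : IsEdgeCliquePartition G P) (μ : ℝ) (x : V → ℝ) (hx : x ≠ 0)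
    (hμ : (G.adjMatrix ℝ).mulVec x = μ • x) :
    -(maxCliqueDeg P : ℝ) ≤ μ := by
  set Q : ℝ := ∑ v, (x v)^2 with hQdef
  have hQ : 0 < Q := by
    obtain ⟨v, hv⟩ : ∃ v, x v ≠ 0 := by
      by_contra hcon; push_neg at hcon
      exact hx (funext fun v => hcon v)
    exact Finset.sum_pos' (fun w _ => sq_nonneg _) ⟨v, Finset.mem_univ v, by positivity⟩
  have hdot : x ⬝ᵥ (G.adjMatrix ℝ).mulVec x = μ * Q := by
    rw [hμ]
    simp only [dotProduct, Pi.smul_apply, smul_eq_mul, hQdef, Finset.mul_sum]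
    exact Finset.sum_congr rfl fun v _ => by ring
  have expand : x ⬝ᵥ (G.adjMatrix ℝ).mulVec x
      = ∑ c ∈ P, ((∑ v ∈ c, x v)^2 - ∑ v ∈ c, (x v)^2) := by
    simp only [dotProduct, Matrix.mulVec, dotProduct]
    calc ∑ u, x u * ∑ v, G.adjMatrix ℝ u v * x v
        = ∑ u, ∑ v, ∑ c ∈ P, (if u ∈ c ∧ v ∈ c ∧ u ≠ v then (1:ℝ) else 0) * (x u * x v) := by
          refine Finset.sum_congr rfl fun u _ => ?_
          rw [Finset.mul_sum]
          refine Finset.sum_congr rfl fun v _ => ?_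
          rw [adj_entry G P hP, Finset.sum_mul, Finset.mul_sum]
          exact Finset.sum_congr rfl fun c _ => by ring
      _ = ∑ u, ∑ c ∈ P, ∑ v, (if u ∈ c ∧ v ∈ c ∧ u ≠ v then (1:ℝ) else 0) * (x u * x v) :=
          Finset.sum_congr rfl fun u _ => Finset.sum_comm
      _ = ∑ c ∈ P, ∑ u, ∑ v, (if u ∈ c ∧ v ∈ c ∧ u ≠ v then (1:ℝ) else 0) * (x u * x v) :=
          Finset.sum_comm
      _ = ∑ c ∈ P, ((∑ v ∈ c, x v)^2 - ∑ v ∈ c, (x v)^2) :=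
          Finset.sum_congr rfl fun c _ => clique_quad c x
  have hswap : ∑ c ∈ P, ∑ v ∈ c, (x v)^2 = ∑ v, (cliqueDeg P v : ℝ) * (x v)^2 := by
    have : ∀ c ∈ P, ∑ v ∈ c, (x v)^2 = ∑ v : V, (if v ∈ c then (x v)^2 else 0) := by
      intro c _; simp [Finset.sum_ite_mem]
    rw [Finset.sum_congr rfl this, Finset.sum_comm]
    refine Finset.sum_congr rfl fun v _ => ?_
    rw [Finset.sum_ite, Finset.sum_const, Finset.sum_const]
    simp [cliqueDeg, mul_comm]
  have hbound : -(↑(maxCliqueDeg P) * Q) ≤ μ * Q := by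
    rw [← hdot, expand]
    have h1 : ∑ c ∈ P, ((∑ v ∈ c, x v)^2 - ∑ v ∈ c, (x v)^2)
        ≥ ∑ c ∈ P, (0 - ∑ v ∈ c, (x v)^2) :=
      Finset.sum_le_sum fun c _ => by
        have := sq_nonneg (∑ v ∈ c, x v); linarith
    have h2 : ∑ c ∈ P, ((0:ℝ) - ∑ v ∈ c, (x v)^2) = -∑ v, (cliqueDeg P v : ℝ) * (x v)^2 := by
      simp [Finset.sum_sub_distrib, hswap]
    have h3 : ∑ v, (cliqueDeg P v : ℝ) * (x v)^2 ≤ ↑(maxCliqueDeg P) * Q := by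
      rw [hQdef, Finset.mul_sum]
      refine Finset.sum_le_sum fun v _ => ?_
      have : cliqueDeg P v ≤ maxCliqueDeg P := Finset.le_sup (Finset.mem_univ v)
      exact mul_le_mul_of_nonneg_right (by exact_mod_cast this) (sq_nonneg _)
    linarith
  have := le_of_mul_le_mul_right (by linarith [hbound] : -(↑(maxCliqueDeg P)) * Q ≤ μ * Q) hQ
  exact this
end

section
/- Let G be a finite simple graph on n vertices, let P = {E_i : i ∈ I} be an edge clique partition of G, for each vertex v let m_v = m_v(P) be its clique degree, and let m = m_G(P) be the maximum clique degree. Then −m is an eigenvalue of the adjacency matrix of G if and only if there exists a nonzero real vector X = (x_v)_{v ∈ V(G)} such that (a) for every i ∈ I, Σ_{v ∈ V(G[E_i])} x_v = 0, and (b) x_v = 0 for every vertex v with m_v ≠ m. Moreover, in that case every such X is an eigenvector of the adjacency matrix associated with the eigenvalue −m, and conversely every eigenvector for −m satisfies (a) and (b). -/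
/-- `-m` is an eigenvalue of the adjacency matrix of `G` iff there
is a nonzero vector `X` with (a) zero sum on every clique of `P` and
(b) vanishing at every vertex whose clique degree is not maximal; moreover a
nonzero `X` is an eigenvector for `-m` exactly when (a) and (b) hold. -/
theorem neg_maxCliqueDeg_eigenvalue_iff {V : Type*} [Fintype V] [DecidableEq V]
    (G : SimpleGraph V) [DecidableRel G.Adj] (P : Finset (Finset V))
    (hP : IsEdgeCliquePartition G P) :
    ((∃ x : V → ℝ, x ≠ 0 ∧ (G.adjMatrix ℝ).mulVec x = (-(maxCliqueDeg P : ℝ)) • x) ↔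
      (∃ x : V → ℝ, x ≠ 0 ∧ (∀ c ∈ P, ∑ v ∈ c, x v = 0) ∧
        ∀ v, cliqueDeg P v ≠ maxCliqueDeg P → x v = 0)) ∧
    ∀ x : V → ℝ, x ≠ 0 →
      ((G.adjMatrix ℝ).mulVec x = (-(maxCliqueDeg P : ℝ)) • x ↔
        (∀ c ∈ P, ∑ v ∈ c, x v = 0) ∧
          ∀ v, cliqueDeg P v ≠ maxCliqueDeg P → x v = 0) := by
  have hle : ∀ v : V, cliqueDeg P v ≤ maxCliqueDeg P :=
    fun v => Finset.le_sup (Finset.mem_univ v)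
  set m : ℕ := maxCliqueDeg P with hm
  have key : ∀ x : V → ℝ, ((G.adjMatrix ℝ).mulVec x = (-(m : ℝ)) • x ↔
      (∀ c ∈ P, ∑ v ∈ c, x v = 0) ∧ ∀ v, cliqueDeg P v ≠ m → x v = 0) := by
    intro x
    have hnbr : ∀ v : V, G.neighborFinset v
        = (P.filter fun c => v ∈ c).biUnion fun c => c.erase v := by
      intro v
      ext u
      simp only [SimpleGraph.mem_neighborFinset, Finset.mem_biUnion, Finset.mem_filter,
        Finset.mem_erase]
      constructor
      · intro hadj
        obtain ⟨c, ⟨hcP, hmem⟩, _⟩ := hP.2 _ ((G.mem_edgeSet).2 hadj)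
        exact ⟨c, ⟨hcP, hmem v (by simp)⟩, G.ne_of_adj hadj.symm, hmem u (by simp)⟩
      · rintro ⟨c, ⟨hcP, hvc⟩, hne, huc⟩
        exact (hP.1 c hcP).1 hvc huc (Ne.symm hne)
    have hdisj : ∀ v : V, Set.PairwiseDisjoint ((P.filter fun c => v ∈ c : Finset (Finset V)) : Set (Finset V))
        (fun c => c.erase v) := by
      intro v c hc c' hc' hne
      simp only [Finset.coe_filter, Set.mem_setOf_eq] at hc hc'
      simp only [Function.onFun]
      rw [Finset.disjoint_left]
      intro u hu hu'
      rw [Finset.mem_erase] at hu hu'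
      have hadj : G.Adj v u := (hP.1 c hc.1).1 hc.2 hu.2 (Ne.symm hu.1)
      obtain ⟨d, _, huniq⟩ := hP.2 _ ((G.mem_edgeSet).2 hadj)
      have hmemc : ∀ w, w ∈ (s(v, u) : Sym2 V) → w ∈ c := by
        intro w hw; rw [Sym2.mem_iff] at hw
        rcases hw with h | h <;> subst h
        exacts [hc.2, hu.2]
      have hmemc' : ∀ w, w ∈ (s(v, u) : Sym2 V) → w ∈ c' := by
        intro w hw; rw [Sym2.mem_iff] at hw
        rcases hw with h | h <;> subst h
        exacts [hc'.2, hu'.2]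
      exact hne ((huniq c ⟨hc.1, hmemc⟩).trans (huniq c' ⟨hc'.1, hmemc'⟩).symm)
    have hmul : ∀ v : V, (G.adjMatrix ℝ).mulVec x v
        = (∑ c ∈ P.filter fun c => v ∈ c, ∑ u ∈ c, x u) - (cliqueDeg P v : ℝ) * x v := by
      intro v
      rw [SimpleGraph.adjMatrix_mulVec_apply, hnbr v, Finset.sum_biUnion (hdisj v)]
      rw [Finset.sum_congr rfl fun c hc =>
        Finset.sum_erase_eq_sub (Finset.mem_filter.1 hc).2]
      rw [Finset.sum_sub_distrib, Finset.sum_const, nsmul_eq_mul]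
      rfl
    constructor
    · intro h
      have hv : ∀ v : V, (∑ c ∈ P.filter fun c => v ∈ c, ∑ u ∈ c, x u)
          = ((cliqueDeg P v : ℝ) - (m : ℝ)) * x v := by
        intro v
        have := congrFun h v
        rw [hmul v] at this
        simp only [Pi.smul_apply, smul_eq_mul] at this
        linarith
      have hswap : ∀ g : Finset V → V → ℝ,
          (∑ c ∈ P, ∑ v ∈ c, g c v) = ∑ v, ∑ c ∈ P.filter fun c => v ∈ c, g c v := by
        intro g
        calc ∑ c ∈ P, ∑ v ∈ c, g c v
            = ∑ c ∈ P, ∑ v ∈ Finset.univ, if v ∈ c then g c v else 0 := by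
              refine Finset.sum_congr rfl fun c _ => ?_
              rw [Finset.sum_ite_mem, Finset.univ_inter]
          _ = ∑ v ∈ Finset.univ, ∑ c ∈ P, if v ∈ c then g c v else 0 := Finset.sum_comm
          _ = ∑ v, ∑ c ∈ P.filter fun c => v ∈ c, g c v := by
              exact Finset.sum_congr rfl fun v _ => (Finset.sum_filter _ _).symm
      have hT : (∑ c ∈ P, (∑ u ∈ c, x u) ^ 2)
          = ∑ v, ((cliqueDeg P v : ℝ) - (m : ℝ)) * (x v) ^ 2 := by
        calc ∑ c ∈ P, (∑ u ∈ c, x u) ^ 2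
            = ∑ c ∈ P, ∑ v ∈ c, x v * (∑ u ∈ c, x u) := by
              refine Finset.sum_congr rfl fun c _ => ?_
              rw [sq, Finset.sum_mul]
          _ = ∑ v, ∑ c ∈ P.filter fun c => v ∈ c, x v * (∑ u ∈ c, x u) :=
              hswap fun c v => x v * (∑ u ∈ c, x u)
          _ = ∑ v, x v * (∑ c ∈ P.filter fun c => v ∈ c, ∑ u ∈ c, x u) := by
              refine Finset.sum_congr rfl fun v _ => (Finset.mul_sum _ _ _).symm
          _ = ∑ v, ((cliqueDeg P v : ℝ) - (m : ℝ)) * (x v) ^ 2 := by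
              refine Finset.sum_congr rfl fun v _ => ?_
              rw [hv v]; ring
      have hT0 : (∑ c ∈ P, (∑ u ∈ c, x u) ^ 2) = 0 := by
        have h1 : (0 : ℝ) ≤ ∑ c ∈ P, (∑ u ∈ c, x u) ^ 2 :=
          Finset.sum_nonneg fun c _ => sq_nonneg _
        have h2 : (∑ v, ((cliqueDeg P v : ℝ) - (m : ℝ)) * (x v) ^ 2) ≤ 0 := by
          refine Finset.sum_nonpos fun v _ => ?_
          have : (cliqueDeg P v : ℝ) ≤ (m : ℝ) := by exact_mod_cast hle v
          nlinarith [sq_nonneg (x v)]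
        linarith [hT ▸ h2]
      constructor
      · intro c hc
        have := (Finset.sum_eq_zero_iff_of_nonneg
          (fun c _ => sq_nonneg (∑ u ∈ c, x u))).1 hT0 c hc
        exact pow_eq_zero_iff (by norm_num) |>.1 this
      · intro v hvne
        have hsum0 : (∑ v, ((m : ℝ) - (cliqueDeg P v : ℝ)) * (x v) ^ 2) = 0 := by
          have : (∑ v, ((m : ℝ) - (cliqueDeg P v : ℝ)) * (x v) ^ 2)
              = -(∑ v, ((cliqueDeg P v : ℝ) - (m : ℝ)) * (x v) ^ 2) := by
            rw [← Finset.sum_neg_distrib]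
            exact Finset.sum_congr rfl fun v _ => by ring
          rw [this, ← hT, hT0, neg_zero]
        have hterm : ((m : ℝ) - (cliqueDeg P v : ℝ)) * (x v) ^ 2 = 0 := by
          refine (Finset.sum_eq_zero_iff_of_nonneg fun w _ => ?_).1 hsum0 v (Finset.mem_univ v)
          have : (cliqueDeg P w : ℝ) ≤ (m : ℝ) := by exact_mod_cast hle w
          nlinarith [sq_nonneg (x w)]
        have hpos : (0 : ℝ) < (m : ℝ) - (cliqueDeg P v : ℝ) := by
          have h1 : cliqueDeg P v < m := lt_of_le_of_ne (hle v) hvne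
          have : (cliqueDeg P v : ℝ) < (m : ℝ) := by exact_mod_cast h1
          linarith
        have : (x v) ^ 2 = 0 := by
          rcases mul_eq_zero.1 hterm with h | h
          · exact absurd h (ne_of_gt hpos)
          · exact h
        exact pow_eq_zero_iff (by norm_num) |>.1 this
    · rintro ⟨ha, hb⟩
      funext v
      rw [hmul v]
      have hS : (∑ c ∈ P.filter fun c => v ∈ c, ∑ u ∈ c, x u) = 0 :=
        Finset.sum_eq_zero fun c hc => ha c (Finset.mem_filter.1 hc).1
      rw [hS]
      simp only [Pi.smul_apply, smul_eq_mul]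
      by_cases hcase : cliqueDeg P v = m
      · rw [hcase]; ring
      · rw [hb v hcase]; ring
  refine ⟨⟨fun ⟨x, hx, h⟩ => ⟨x, hx, (key x).1 h⟩,
    fun ⟨x, hx, h⟩ => ⟨x, hx, (key x).2 h⟩⟩, fun x _ => key x⟩
end

section
/- Let G be a finite simple graph and let P be any edge clique partition of G with |P| parts. Then every real eigenvalue μ of the adjacency matrix of G satisfies μ ≥ −|P|. In particular, if μ_min is the least eigenvalue of G, then −μ_min is at most the content C(G) of G, the minimum number of parts of an edge clique partition of G. -/
/-- The content of `G`: the minimum number of parts of an edge clique partition. -/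
noncomputable def content {V : Type*} (G : SimpleGraph V) : ℕ :=
  sInf {k | ∃ P : Finset (Finset V), IsEdgeCliquePartition G P ∧ P.card = k}

section Aux

variable {V : Type*} [Fintype V] [DecidableEq V] (G : SimpleGraph V) [DecidableRel G.Adj]

/-- Counting the parts containing a given pair of vertices. -/
lemma count_pair {P : Finset (Finset V)} (hP : IsEdgeCliquePartition G P) (u v : V) :
    ((P.filter fun c => u ∈ c ∧ v ∈ c).card : ℝ) =
      (if G.Adj u v then 1 else 0) + (if u = v then (cliqueDeg P v : ℝ) else 0) := by
  by_cases huv : u = v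
  · subst huv
    simp [G.irrefl, cliqueDeg]
  · simp only [if_neg huv, add_zero]
    by_cases hadj : G.Adj u v
    · rw [if_pos hadj]
      obtain ⟨c₀, ⟨hc₀P, hc₀mem⟩, hcuniq⟩ := hP.2 s(u, v) hadj
      have : (P.filter fun c => u ∈ c ∧ v ∈ c) = {c₀} := by
        ext c
        simp only [Finset.mem_filter, Finset.mem_singleton]
        constructor
        · rintro ⟨hcP, hu, hv⟩
          exact hcuniq c ⟨hcP, by intro w hw; rcases Sym2.mem_iff.1 hw with h | h <;> subst h <;>
            assumption⟩
        · rintro rfl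
          exact ⟨hc₀P, hc₀mem u (Sym2.mem_mk_left u v), hc₀mem v (Sym2.mem_mk_right u v)⟩
      rw [this]; simp
    · rw [if_neg hadj]
      have : (P.filter fun c => u ∈ c ∧ v ∈ c) = ∅ := by
        ext c
        simp only [Finset.mem_filter, Finset.notMem_empty, iff_false, not_and]
        rintro hcP hu hv
        exact hadj ((hP.1 c hcP).1 hu hv huv)
      rw [this]; simp

lemma eigen_ge (μ : ℝ) (x : V → ℝ) (hx : x ≠ 0)
    (hμ : (G.adjMatrix ℝ).mulVec x = μ • x)
    (P : Finset (Finset V)) (hP : IsEdgeCliquePartition G P) : -(P.card : ℝ) ≤ μ := by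
  set S : ℝ := ∑ v, x v ^ 2 with hS
  have hSpos : 0 < S := by
    have : ∃ v, x v ≠ 0 := by
      by_contra h
      push_neg at h
      exact hx (funext h)
    obtain ⟨v, hv⟩ := this
    exact Finset.sum_pos' (fun i _ => sq_nonneg _)
      ⟨v, Finset.mem_univ v, by positivity⟩
  -- quadratic form
  have hquad : ∑ u, ∑ v, (G.adjMatrix ℝ) u v * (x u * x v) = μ * S := by
    have : ∀ u, ∑ v, (G.adjMatrix ℝ) u v * (x u * x v)
        = x u * ((G.adjMatrix ℝ).mulVec x u) := by
      intro u
      rw [Matrix.mulVec, dotProduct, Finset.mul_sum]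
      exact Finset.sum_congr rfl fun v _ => by ring
    simp_rw [this, hμ]
    simp only [Pi.smul_apply, smul_eq_mul, hS]
    rw [Finset.mul_sum]
    exact Finset.sum_congr rfl fun v _ => by ring
  -- sum of squares over cliques
  have hsq : ∑ c ∈ P, (∑ v ∈ c, x v) ^ 2
      = ∑ u, ∑ v, ((P.filter fun c => u ∈ c ∧ v ∈ c).card : ℝ) * (x u * x v) := by
    have h0 : ∀ c : Finset V, ∑ v ∈ c, x v = ∑ v, if v ∈ c then x v else 0 := by
      intro c
      rw [Finset.sum_ite_mem, Finset.univ_inter]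
    have h1 : ∀ c : Finset V, (∑ v ∈ c, x v) ^ 2
        = ∑ u, ∑ v, (if u ∈ c ∧ v ∈ c then x u * x v else 0) := by
      intro c
      rw [sq, h0, Finset.sum_mul_sum]
      refine Finset.sum_congr rfl fun u _ => Finset.sum_congr rfl fun v _ => ?_
      by_cases hu : u ∈ c <;> by_cases hv : v ∈ c <;> simp [hu, hv]
    simp_rw [h1]
    rw [Finset.sum_comm]
    refine Finset.sum_congr rfl fun u _ => ?_
    rw [Finset.sum_comm]
    refine Finset.sum_congr rfl fun v _ => ?_
    rw [Finset.sum_ite, Finset.sum_const, Finset.sum_const_zero, add_zero, nsmul_eq_mul]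
  -- combine using count_pair
  have hcomb : ∑ c ∈ P, (∑ v ∈ c, x v) ^ 2
      = μ * S + ∑ u, (cliqueDeg P u : ℝ) * x u ^ 2 := by
    rw [hsq]
    have : ∀ u v : V, ((P.filter fun c => u ∈ c ∧ v ∈ c).card : ℝ) * (x u * x v)
        = (G.adjMatrix ℝ) u v * (x u * x v)
          + (if u = v then (cliqueDeg P v : ℝ) else 0) * (x u * x v) := by
      intro u v
      rw [count_pair G hP u v, SimpleGraph.adjMatrix_apply]
      ring
    simp_rw [this, Finset.sum_add_distrib]
    rw [hquad]
    congr 1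
    refine Finset.sum_congr rfl fun u _ => ?_
    simp_rw [ite_mul, zero_mul]
    rw [Finset.sum_ite_eq Finset.univ u (fun v => (cliqueDeg P v : ℝ) * (x u * x v))]
    simp [sq]
  -- bound
  have hdeg : ∀ u, (cliqueDeg P u : ℝ) ≤ (P.card : ℝ) := by
    intro u
    exact_mod_cast Finset.card_filter_le P _
  have hbound : μ * S + ∑ u, (cliqueDeg P u : ℝ) * x u ^ 2 ≥ 0 := by
    rw [← hcomb]
    exact Finset.sum_nonneg fun c _ => sq_nonneg _
  have h2 : ∑ u, (cliqueDeg P u : ℝ) * x u ^ 2 ≤ (P.card : ℝ) * S := by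
    rw [hS, Finset.mul_sum]
    exact Finset.sum_le_sum fun u _ => mul_le_mul_of_nonneg_right (hdeg u) (sq_nonneg _)
  have : -(P.card : ℝ) * S ≤ μ * S := by nlinarith
  exact le_of_mul_le_mul_right (by linarith [this]) hSpos

/-- Every finite graph has an edge clique partition: the one whose parts are the edges. -/
lemma exists_ecp : ∃ P : Finset (Finset V), IsEdgeCliquePartition G P := by
  refine ⟨G.edgeFinset.image
    (Sym2.lift ⟨fun u v => ({u, v} : Finset V), fun u v => Finset.pair_comm u v⟩), ?_, ?_⟩
  · intro c hc
    simp only [Finset.mem_image, SimpleGraph.mem_edgeFinset] at hc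
    obtain ⟨e, he, rfl⟩ := hc
    induction e with
    | _ u v =>
      rw [SimpleGraph.mem_edgeSet] at he
      have hne : u ≠ v := he.ne
      constructor
      · simp only [Sym2.lift_mk]
        intro a ha b hb hab
        simp only [Finset.coe_insert, Finset.coe_singleton, Set.mem_insert_iff,
          Set.mem_singleton_iff] at ha hb
        rcases ha with rfl | rfl <;> rcases hb with rfl | rfl
        · exact absurd rfl hab
        · exact he
        · exact he.symm
        · exact absurd rfl hab
      · simp only [Sym2.lift_mk]
        rw [Finset.card_pair hne]
  · intro e he
    induction e with
    | _ u v =>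
      rw [SimpleGraph.mem_edgeSet] at he
      have hne : u ≠ v := he.ne
      refine ⟨{u, v}, ⟨?_, ?_⟩, ?_⟩
      · exact Finset.mem_image.2 ⟨s(u, v), SimpleGraph.mem_edgeFinset.2 he, rfl⟩
      · intro w hw
        rcases Sym2.mem_iff.1 hw with rfl | rfl <;> simp
      · rintro c ⟨hcP, hc⟩
        simp only [Finset.mem_image, SimpleGraph.mem_edgeFinset] at hcP
        obtain ⟨f, hf, rfl⟩ := hcP
        induction f with
        | _ a b =>
          rw [SimpleGraph.mem_edgeSet] at hf
          simp only [Sym2.lift_mk] at hc ⊢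
          have hu : u ∈ ({a, b} : Finset V) := hc u (Sym2.mem_mk_left u v)
          have hv : v ∈ ({a, b} : Finset V) := hc v (Sym2.mem_mk_right u v)
          have hsub : ({u, v} : Finset V) ⊆ {a, b} := by
            intro w hw
            rcases Finset.mem_insert.1 hw with rfl | hw
            · exact hu
            · rw [Finset.mem_singleton.1 hw]; exact hv
          symm
          apply Finset.eq_of_subset_of_card_le hsub
          rw [Finset.card_pair hne]
          rw [Finset.card_pair hf.ne]

end Aux

/-- every real eigenvalue `μ` of the adjacency matrix of `G`
satisfies `μ ≥ -|P|` for every edge clique partition `P`; in particular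
`-μ ≤ C(G)` (applied to the least eigenvalue, this gives `-μ_min ≤ C(G)`). -/
theorem eigenvalue_ge_neg_content {V : Type*} [Fintype V] [DecidableEq V]
    (G : SimpleGraph V) [DecidableRel G.Adj] (μ : ℝ) (x : V → ℝ) (hx : x ≠ 0)
    (hμ : (G.adjMatrix ℝ).mulVec x = μ • x) :
    (∀ P : Finset (Finset V), IsEdgeCliquePartition G P → -(P.card : ℝ) ≤ μ) ∧
      -μ ≤ (content G : ℝ) := by
  refine ⟨fun P hP => eigen_ge G μ x hx hμ P hP, ?_⟩
  obtain ⟨P₀, hP₀⟩ := exists_ecp G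
  have hne : {k | ∃ P : Finset (Finset V), IsEdgeCliquePartition G P ∧ P.card = k}.Nonempty :=
    ⟨P₀.card, P₀, hP₀, rfl⟩
  obtain ⟨P₁, hP₁, hcard⟩ := Nat.sInf_mem hne
  have := eigen_ge G μ x hx hμ P₁ hP₁
  rw [content, ← hcard]
  linarith
end

section
/- For every n ≥ 4, the number −4 is an eigenvalue of the adjacency matrix A of the n-Queens' graph Q(n), and its multiplicity equals (n−3)²; that is, the kernel of A + 4·I (as a linear map on ℝ^{n²}) has dimension exactly (n−3)². -/
namespace QueensAux
open Matrix

/-- Lines of the board: rows ⊕ columns ⊕ diagonals ⊕ antidiagonals. -/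
abbrev Ln (n : ℕ) := (Fin n ⊕ Fin n) ⊕ (Fin (2*n-1) ⊕ Fin (2*n-1))

/-- Incidence matrix squares × lines. -/
def B (n : ℕ) : Matrix (Fin n × Fin n) (Ln n) ℝ := fun u l =>
  match l with
  | .inl (.inl r) => if (u.1 : ℕ) = r then 1 else 0
  | .inl (.inr c) => if (u.2 : ℕ) = c then 1 else 0
  | .inr (.inl k) => if (u.1 : ℕ) + (u.2 : ℕ) = k then 1 else 0
  | .inr (.inr m) => if (u.1 : ℕ) + (n-1) = (m : ℕ) + (u.2 : ℕ) then 1 else 0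

lemma sum_ind {m : ℕ} (a b : ℕ) (ha : a < m) :
    (∑ k : Fin m, (if a = (k : ℕ) then (1:ℝ) else 0) * (if b = (k : ℕ) then 1 else 0))
      = if a = b then 1 else 0 := by
  rw [Finset.sum_eq_single (⟨a, ha⟩ : Fin m)]
  · rcases eq_or_ne a b with rfl | hab
    · simp
    · simp [hab, Ne.symm hab]
  · intro k _ hk
    rcases eq_or_ne a (k : ℕ) with h1 | h1
    · exfalso; exact hk (by simp [Fin.ext_iff, ← h1])
    · simp [h1]
  · simp

lemma BBt (n : ℕ) (hn : 4 ≤ n) :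
    (queensGraph n).adjMatrix ℝ
        + (4 : ℝ) • (1 : Matrix (Fin n × Fin n) (Fin n × Fin n) ℝ)
      = B n * (B n)ᵀ := by
  ext u v
  have hu1 := u.1.isLt; have hu2 := u.2.isLt
  have hv1 := v.1.isLt; have hv2 := v.2.isLt
  rw [Matrix.mul_apply]
  simp only [Fintype.sum_sum_type]
  simp only [B, transpose_apply]
  rw [sum_ind (u.1 : ℕ) (v.1 : ℕ) u.1.isLt, sum_ind (u.2 : ℕ) (v.2 : ℕ) u.2.isLt]
  have hd : ((u.1 : ℕ) + (u.2 : ℕ)) < 2*n-1 := by omega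
  rw [sum_ind _ _ hd]
  -- antidiagonal part
  have he : (∑ k : Fin (2*n-1),
      (if (u.1 : ℕ) + (n-1) = (k : ℕ) + (u.2 : ℕ) then (1:ℝ) else 0) *
      (if (v.1 : ℕ) + (n-1) = (k : ℕ) + (v.2 : ℕ) then 1 else 0))
      = if (u.1 : ℕ) + (v.2 : ℕ) = (v.1 : ℕ) + (u.2 : ℕ) then 1 else 0 := by
    have h1 : ∀ k : Fin (2*n-1),
        ((if (u.1 : ℕ) + (n-1) = (k : ℕ) + (u.2 : ℕ) then (1:ℝ) else 0) *
          (if (v.1 : ℕ) + (n-1) = (k : ℕ) + (v.2 : ℕ) then 1 else 0))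
        = (if (u.1 : ℕ) + (n-1) - (u.2 : ℕ) = (k : ℕ) then (1:ℝ) else 0) *
          (if (v.1 : ℕ) + (n-1) - (v.2 : ℕ) = (k : ℕ) then 1 else 0) := by
      intro k
      congr 1 <;> exact if_congr (by omega) rfl rfl
    rw [Finset.sum_congr rfl (fun k _ => h1 k), sum_ind _ _ (by omega)]
    exact if_congr (by omega) rfl rfl
  rw [he]
  by_cases huv : u = v
  · subst huv
    have h0 : (queensGraph n).adjMatrix ℝ u u = 0 := if_neg (SimpleGraph.irrefl _)
    norm_num [h0, Matrix.one_apply]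
  · rw [Matrix.add_apply, Matrix.smul_apply, Matrix.one_apply_ne huv, smul_zero, add_zero,
      SimpleGraph.adjMatrix_apply]
    have hne12 : (u.1 : ℕ) ≠ (v.1 : ℕ) ∨ (u.2 : ℕ) ≠ (v.2 : ℕ) := by
      by_contra h
      push_neg at h
      exact huv (Prod.ext (Fin.ext h.1) (Fin.ext h.2))
    by_cases hadj : (queensGraph n).Adj u v
    · rw [if_pos hadj]
      obtain ⟨-, hc⟩ := hadj
      simp only [Fin.ext_iff] at hc
      rcases hc with h | h | h | h <;> split_ifs <;> first | (exfalso; omega) | norm_num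
    · rw [if_neg hadj]
      have hc : ¬((u.1 : ℕ) = v.1 ∨ (u.2 : ℕ) = v.2 ∨
          (u.1 : ℕ) + (u.2 : ℕ) = (v.1 : ℕ) + (v.2 : ℕ) ∨
          (u.1 : ℕ) + (v.2 : ℕ) = (v.1 : ℕ) + (u.2 : ℕ)) := by
        intro h
        exact hadj ⟨huv, by simpa [Fin.ext_iff] using h⟩
      push_neg at hc
      obtain ⟨h1', h2', h3', h4'⟩ := hc
      split_ifs <;> first | (exfalso; omega) | norm_num

end QueensAux

section Part2
namespace QueensAux
open Matrix

/-- The 4×4 kernel pattern of Q(4). -/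
def pat : ℤ → ℤ → ℝ := fun a b =>
  (if a = 0 ∧ b = 1 then (1:ℝ) else 0) - (if a = 0 ∧ b = 2 then 1 else 0)
  - (if a = 1 ∧ b = 0 then 1 else 0) + (if a = 1 ∧ b = 3 then 1 else 0)
  + (if a = 2 ∧ b = 0 then 1 else 0) - (if a = 2 ∧ b = 3 then 1 else 0)
  - (if a = 3 ∧ b = 1 then 1 else 0) + (if a = 3 ∧ b = 2 then 1 else 0)

lemma pat_support {a b : ℤ} (h : pat a b ≠ 0) :
    (a = 0 ∧ (b = 1 ∨ b = 2)) ∨ (a = 1 ∧ (b = 0 ∨ b = 3)) ∨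
    (a = 2 ∧ (b = 0 ∨ b = 3)) ∨ (a = 3 ∧ (b = 1 ∨ b = 2)) := by
  by_contra hc
  push_neg at hc
  apply h
  unfold pat
  split_ifs <;> first | (exfalso; omega) | norm_num

lemma pat_zero_of {a b : ℤ}
    (h : ¬((a = 0 ∧ (b = 1 ∨ b = 2)) ∨ (a = 1 ∧ (b = 0 ∨ b = 3)) ∨
      (a = 2 ∧ (b = 0 ∨ b = 3)) ∨ (a = 3 ∧ (b = 1 ∨ b = 2)))) : pat a b = 0 := by
  by_contra hc; exact h (pat_support hc)

lemma pat01 : pat 0 1 = 1 := by norm_num [pat]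

lemma patRow (a : ℤ) : pat a 0 + pat a 1 + pat a 2 + pat a 3 = 0 := by
  norm_num [pat]
  split_ifs <;> first | (exfalso; omega) | norm_num

lemma patCol (b : ℤ) : pat 0 b + pat 1 b + pat 2 b + pat 3 b = 0 := by
  norm_num [pat]
  split_ifs <;> first | (exfalso; omega) | norm_num

lemma patDiag (c : ℤ) : pat 0 c + pat 1 (c-1) + pat 2 (c-2) + pat 3 (c-3) = 0 := by
  norm_num [pat]
  split_ifs <;> first | (exfalso; omega) | norm_num

lemma patAnti (c : ℤ) : pat 0 c + pat 1 (c+1) + pat 2 (c+2) + pat 3 (c+3) = 0 := by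
  norm_num [pat]
  split_ifs <;> first | (exfalso; omega) | norm_num

/-- Sum of a (support ⊆ [t,t+3]-shifted) function over `Fin n`. -/
lemma sum_fin_pat {n t : ℕ} (h : t + 3 < n) (f : ℤ → ℝ)
    (hf : ∀ b : ℤ, b < 0 ∨ 3 < b → f b = 0) :
    ∑ j : Fin n, f ((j : ℤ) - (t : ℤ)) = f 0 + f 1 + f 2 + f 3 := by
  rw [Fin.sum_univ_eq_sum_range (fun j => f ((j : ℤ) - (t : ℤ)))]
  have hsub : ({t, t+1, t+2, t+3} : Finset ℕ) ⊆ Finset.range n := by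
    intro x hx
    simp only [Finset.mem_insert, Finset.mem_singleton] at hx
    simp only [Finset.mem_range]
    omega
  rw [← Finset.sum_subset hsub]
  · rw [Finset.sum_insert (by intro hm; simp only [Finset.mem_insert, Finset.mem_singleton] at hm; omega),
      Finset.sum_insert (by intro hm; simp only [Finset.mem_insert, Finset.mem_singleton] at hm; omega),
      Finset.sum_insert (by intro hm; simp only [Finset.mem_insert, Finset.mem_singleton] at hm; omega),
      Finset.sum_singleton]
    have e0 : ((t : ℤ) - t) = 0 := by ring
    have e1 : (((t+1 : ℕ) : ℤ) - t) = 1 := by omega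
    have e2 : (((t+2 : ℕ) : ℤ) - t) = 2 := by omega
    have e3 : (((t+3 : ℕ) : ℤ) - t) = 3 := by omega
    rw [e0, e1, e2, e3]
    ring
  · intro x hx hnx
    simp only [Finset.mem_insert, Finset.mem_singleton] at hnx
    apply hf
    push_neg at hnx
    omega

lemma collapseP {n : ℕ} {P : Fin n → Prop} [DecidablePred P] {a : ℕ} (ha : a < n)
    (hP : ∀ j : Fin n, P j ↔ (j : ℕ) = a) (h : Fin n → ℝ) :
    ∑ j : Fin n, (if P j then (1:ℝ) else 0) * h j = h ⟨a, ha⟩ := by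
  rw [Finset.sum_eq_single (⟨a, ha⟩ : Fin n)]
  · rw [if_pos ((hP _).mpr rfl), one_mul]
  · intro k _ hk
    rw [if_neg, zero_mul]
    intro hPk
    exact hk (Fin.ext ((hP k).mp hPk))
  · simp

lemma collapseP0 {n : ℕ} {P : Fin n → Prop} [DecidablePred P]
    (hP : ∀ j : Fin n, ¬ P j) (h : Fin n → ℝ) :
    ∑ j : Fin n, (if P j then (1:ℝ) else 0) * h j = 0 := by
  apply Finset.sum_eq_zero
  intro k _
  rw [if_neg (hP k), zero_mul]

/-- Translates of the pattern. -/
def patV (n : ℕ) (st : Fin (n-3) × Fin (n-3)) : (Fin n × Fin n) → ℝ :=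
  fun u => pat ((u.1 : ℤ) - (st.1 : ℤ)) ((u.2 : ℤ) - (st.2 : ℤ))

lemma patV_in_ker (n : ℕ) (hn : 4 ≤ n) (st : Fin (n-3) × Fin (n-3)) :
    (B n)ᵀ.mulVec (patV n st) = 0 := by
  obtain ⟨s, t⟩ := st
  have hs : (s : ℕ) + 3 < n := by have := s.isLt; omega
  have ht : (t : ℕ) + 3 < n := by have := t.isLt; omega
  funext l
  rw [Matrix.mulVec, Pi.zero_apply]
  show ∑ u : Fin n × Fin n, (B n)ᵀ l u * patV n (s, t) u = 0
  simp only [transpose_apply]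
  rw [Fintype.sum_prod_type]
  match l with
  | .inl (.inl r) =>
    simp only [B, patV]
    have hrow : ∀ i : Fin n,
        (∑ j : Fin n, (if (i : ℕ) = (r : ℕ) then (1:ℝ) else 0)
          * pat ((i : ℤ) - s) ((j : ℤ) - t))
        = (if (i : ℕ) = (r : ℕ) then (1:ℝ) else 0)
          * ∑ j : Fin n, pat ((i : ℤ) - s) ((j : ℤ) - t) := by
      intro i; rw [Finset.mul_sum]
    rw [Finset.sum_congr rfl (fun i _ => hrow i)]
    have : ∀ i : Fin n, ((if (i : ℕ) = (r : ℕ) then (1:ℝ) else 0)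
          * ∑ j : Fin n, pat ((i : ℤ) - s) ((j : ℤ) - t))
        = (if ((i : ℕ) = (r : ℕ)) then (1:ℝ) else 0)
          * (fun i' : Fin n => ∑ j : Fin n, pat ((i' : ℤ) - s) ((j : ℤ) - t)) i := by
      intro i; rfl
    rw [collapseP r.isLt (fun j => Iff.rfl)]
    rw [sum_fin_pat ht (fun b => pat ((r : ℤ) - s) b)
      (fun b hb => pat_zero_of (by intro hc; omega))]
    exact patRow _
  | .inl (.inr c) =>
    simp only [B, patV]
    have hcol : ∀ i : Fin n,
        (∑ j : Fin n, (if (j : ℕ) = (c : ℕ) then (1:ℝ) else 0)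
          * pat ((i : ℤ) - s) ((j : ℤ) - t))
        = pat ((i : ℤ) - s) ((c : ℤ) - t) := by
      intro i
      rw [collapseP c.isLt (fun j => Iff.rfl) (fun j => pat ((i : ℤ) - s) ((j : ℤ) - t))]
    rw [Finset.sum_congr rfl (fun i _ => hcol i)]
    rw [sum_fin_pat hs (fun a => pat a ((c : ℤ) - t))
      (fun a h_a => pat_zero_of (by intro hc; omega))]
    exact patCol _
  | .inr (.inl k) =>
    simp only [B, patV]
    have hdiag : ∀ i : Fin n,
        (∑ j : Fin n, (if (i : ℕ) + (j : ℕ) = (k : ℕ) then (1:ℝ) else 0)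
          * pat ((i : ℤ) - s) ((j : ℤ) - t))
        = pat ((i : ℤ) - s) ((k : ℤ) - (i : ℤ) - t) := by
      intro i
      by_cases hik : (i : ℕ) ≤ (k : ℕ) ∧ (k : ℕ) - (i : ℕ) < n
      · rw [collapseP hik.2 (fun j => by omega)
          (fun j => pat ((i : ℤ) - s) ((j : ℤ) - t))]
        congr 1
        push_cast
        omega
      · rw [collapseP0 (fun j => by have := j.isLt; omega)
          (fun j => pat ((i : ℤ) - s) ((j : ℤ) - t))]
        refine (pat_zero_of ?_).symm
        intro hc
        have hi := i.isLt
        have hk2 := k.isLt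
        omega
    rw [Finset.sum_congr rfl (fun i _ => hdiag i)]
    have hfun : ∀ i : Fin n, pat ((i : ℤ) - s) ((k : ℤ) - (i : ℤ) - t)
        = (fun x : ℤ => pat x ((k : ℤ) - (s : ℤ) - (t : ℤ) - x)) ((i : ℤ) - s) := by
      intro i
      show _ = pat ((i:ℤ) - s) ((k : ℤ) - s - t - ((i:ℤ) - s))
      congr 1
      ring
    rw [Finset.sum_congr rfl (fun i _ => hfun i)]
    rw [sum_fin_pat hs (fun x : ℤ => pat x ((k : ℤ) - (s : ℤ) - (t : ℤ) - x))
      (fun a h_a => pat_zero_of (by intro hc; omega))]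
    have := patDiag ((k : ℤ) - s - t)
    convert this using 3 <;> ring
  | .inr (.inr m) =>
    simp only [B, patV]
    have hanti : ∀ i : Fin n,
        (∑ j : Fin n, (if (i : ℕ) + (n-1) = (m : ℕ) + (j : ℕ) then (1:ℝ) else 0)
          * pat ((i : ℤ) - s) ((j : ℤ) - t))
        = pat ((i : ℤ) - s) ((i : ℤ) + ((n:ℤ)-1) - (m : ℤ) - t) := by
      intro i
      by_cases him : (m : ℕ) ≤ (i : ℕ) + (n-1) ∧ (i : ℕ) + (n-1) - (m : ℕ) < n
      · rw [collapseP him.2 (fun j => by omega)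
          (fun j => pat ((i : ℤ) - s) ((j : ℤ) - t))]
        congr 1
        have : (1:ℕ) ≤ n := by omega
        push_cast [this]
        omega
      · rw [collapseP0 (fun j => by have := j.isLt; omega)
          (fun j => pat ((i : ℤ) - s) ((j : ℤ) - t))]
        refine (pat_zero_of ?_).symm
        intro hc
        have hi := i.isLt
        have hm2 := m.isLt
        have h1 : (1:ℕ) ≤ n := by omega
        have hcast : ((n:ℤ) - 1) = ((n - 1 : ℕ) : ℤ) := by push_cast [h1]; ring
        rw [hcast] at hc
        omega
    rw [Finset.sum_congr rfl (fun i _ => hanti i)]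
    have hfun : ∀ i : Fin n, pat ((i : ℤ) - s) ((i : ℤ) + ((n:ℤ)-1) - (m : ℤ) - t)
        = (fun x : ℤ => pat x (x + ((s : ℤ) + ((n:ℤ)-1) - (m : ℤ) - (t : ℤ)))) ((i : ℤ) - s) := by
      intro i
      show _ = pat ((i:ℤ) - s) (((i:ℤ) - s) + ((s : ℤ) + ((n:ℤ)-1) - m - t))
      congr 1
      ring
    rw [Finset.sum_congr rfl (fun i _ => hfun i)]
    rw [sum_fin_pat hs (fun x : ℤ => pat x (x + ((s : ℤ) + ((n:ℤ)-1) - (m : ℤ) - (t : ℤ))))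
      (fun a h_a => pat_zero_of (by intro hc; omega))]
    have := patAnti ((s : ℤ) + ((n:ℤ)-1) - m - t)
    convert this using 3 <;> ring

end QueensAux
end Part2
section Part3
namespace QueensAux
open Matrix

lemma patV_indep (n : ℕ) (hn : 4 ≤ n) : LinearIndependent ℝ (patV n) := by
  rw [Fintype.linearIndependent_iff]
  intro g hg
  have key : ∀ N : ℕ, ∀ st : Fin (n-3) × Fin (n-3),
      (st.1 : ℕ) * n + (st.2 : ℕ) = N → g st = 0 := by
    intro N
    induction N using Nat.strong_induction_on with
    | _ N IH =>
      rintro ⟨s, t⟩ hN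
      replace hN : (s : ℕ) * n + (t : ℕ) = N := hN
      have hs := s.isLt
      have ht := t.isLt
      set pt : Fin n × Fin n := (⟨(s : ℕ), by omega⟩, ⟨(t : ℕ) + 1, by omega⟩) with hpt
      have h0 : ∑ st' : Fin (n-3) × Fin (n-3), g st' * patV n st' pt = 0 := by
        have h1 := congrFun hg pt
        simpa using h1
      rw [Finset.sum_eq_single (s, t)] at h0
      · have hval : patV n (s, t) pt = 1 := by
          show pat _ _ = 1
          have e1 : ((pt.1 : ℤ) - (s : ℤ)) = 0 := by simp [hpt]
          have e2 : ((pt.2 : ℤ) - (t : ℤ)) = 1 := by simp [hpt]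
          rw [e1, e2, pat01]
        rw [hval, mul_one] at h0
        exact h0
      · rintro ⟨s', t'⟩ _ hne
        have hs' := s'.isLt
        have ht' := t'.isLt
        by_cases hlt : (s' : ℕ) * n + (t' : ℕ) < N
        · rw [IH _ hlt (s', t') (by dsimp only), zero_mul]
        · apply mul_eq_zero_of_right
          apply pat_zero_of
          intro hc
          have hne2 : (s' : ℕ) ≠ (s : ℕ) ∨ (t' : ℕ) ≠ (t : ℕ) := by
            by_contra hq
            push_neg at hq
            exact hne (Prod.ext (Fin.ext hq.1) (Fin.ext hq.2))
          have e1 : (pt.1 : ℤ) = ((s : ℕ) : ℤ) := by simp [hpt]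
          have e2 : (pt.2 : ℤ) = ((t : ℕ) : ℤ) + 1 := by simp [hpt]
          rw [e1, e2] at hc
          dsimp only at hc
          have hcase : (s' : ℕ) = (s : ℕ) ∨ (s' : ℕ) < (s : ℕ) := by omega
          rcases hcase with hss | hss
          · have ht'c : (t' : ℕ) = (t : ℕ) ∨ ((t' : ℕ) + 1 = (t : ℕ)) := by omega
            rw [hss] at hlt hne2
            rcases ht'c with h | h
            · rcases hne2 with h2 | h2 <;> omega
            · omega
          · have hmul : (s' : ℕ) * n + n ≤ (s : ℕ) * n := by
              have h := Nat.mul_le_mul_right n (show (s' : ℕ) + 1 ≤ (s : ℕ) by omega)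
              rwa [add_one_mul] at h
            omega
      · simp
  intro st
  exact key ((st.1 : ℕ) * n + (st.2 : ℕ)) st rfl

lemma lower_bound (n : ℕ) (hn : 4 ≤ n) :
    (n-3)^2 ≤ Module.finrank ℝ (LinearMap.ker ((B n)ᵀ.mulVecLin)) := by
  have hmem : ∀ st, patV n st ∈ LinearMap.ker ((B n)ᵀ.mulVecLin) := fun st => by
    rw [LinearMap.mem_ker, mulVecLin_apply]
    exact patV_in_ker n hn st
  let v : Fin (n-3) × Fin (n-3) → LinearMap.ker ((B n)ᵀ.mulVecLin) :=
    fun st => ⟨patV n st, hmem st⟩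
  have hv : LinearIndependent ℝ v := by
    apply LinearIndependent.of_comp (LinearMap.ker ((B n)ᵀ.mulVecLin)).subtype
    have he : ((LinearMap.ker ((B n)ᵀ.mulVecLin)).subtype ∘ v) = patV n := rfl
    rw [he]
    exact patV_indep n hn
  have hcard := hv.fintype_card_le_finrank
  simpa [Fintype.card_prod, Fintype.card_fin, pow_two] using hcard

end QueensAux
end Part3
section Part4
namespace QueensAux
open Matrix

lemma elim (n : ℕ) (hn : 4 ≤ n) (r c d e : ℕ → ℝ)
    (hF : ∀ i j : ℕ, i < n → j < n → r i + c j + d (i + j) + e (i + (n-1) - j) = 0)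
    (hr0 : r 0 = 0) (hr1 : r 1 = 0) (hr2 : r 2 = 0)
    (hc0 : c 0 = 0) (hc1 : c 1 = 0) (hd0 : d 0 = 0) (hd1 : d 1 = 0) :
    (∀ i, i < n → r i = 0) ∧ (∀ j, j < n → c j = 0) ∧
    (∀ k, k ≤ 2*n-2 → d k = 0) ∧ (∀ m, m ≤ 2*n-2 → e m = 0) := by
  have main : ∀ j, j < n → c j = 0 ∧ d j = 0 ∧ d (j+1) = 0 ∧ r j = 0 ∧
      e (n-1-j) = 0 ∧ e (n-1+j) = 0 := by
    intro j
    induction j using Nat.strong_induction_on with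
    | _ j IH =>
      intro hjn
      rcases Nat.lt_or_ge j 2 with hj2 | hj2
      · -- j = 0 or j = 1
        interval_cases j
        · -- j = 0
          have h00 := hF 0 0 (by omega) (by omega)
          have hidx : 0 + (n-1) - 0 = n - 1 := by omega
          rw [hidx] at h00
          have he : e (n-1) = 0 := by
            rw [hr0, hc0] at h00
            simp only [Nat.add_zero, Nat.zero_add] at h00
            rw [hd0] at h00
            linarith
          refine ⟨hc0, hd0, hd1, hr0, ?_, ?_⟩
          · have : n - 1 - 0 = n - 1 := by omega
            rw [this]; exact he
          · have : n - 1 + 0 = n - 1 := by omega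
            rw [this]; exact he
        · -- j = 1
          have hP0 := IH 0 (by omega) (by omega)
          have hen1 : e (n-1) = 0 := by
            have := hP0.2.2.2.2.1
            rwa [show n - 1 - 0 = n - 1 by omega] at this
          have hd2 : d 2 = 0 := by
            have h11 := hF 1 1 (by omega) (by omega)
            rw [show (1:ℕ) + 1 = 2 by omega, show 1 + (n-1) - 1 = n-1 by omega] at h11
            rw [hr1, hc1, hen1] at h11
            linarith
          have hem : e (n-1-1) = 0 := by
            have h01 := hF 0 1 (by omega) (by omega)
            rw [show (0:ℕ) + 1 = 1 by omega, show 0 + (n-1) - 1 = n-1-1 by omega] at h01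
            rw [hr0, hc1, hd1] at h01
            linarith
          have hep : e (n-1+1) = 0 := by
            have h10 := hF 1 0 (by omega) (by omega)
            rw [show (1:ℕ) + 0 = 1 by omega, show 1 + (n-1) - 0 = n-1+1 by omega] at h10
            rw [hr1, hc0, hd1] at h10
            linarith
          exact ⟨hc1, hd1, hd2, hr1, hem, hep⟩
      · -- 2 ≤ j
        have hP1 := IH (j-1) (by omega) (by omega)
        have hP2 := IH (j-2) (by omega) (by omega)
        have hdj1 : d (j+1) = 0 := by
          have h := hF 2 (j-1) (by omega) (by omega)
          rw [show 2 + (j-1) = j+1 by omega] at h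
          have he : e (2 + (n-1) - (j-1)) = 0 := by
            rcases Nat.lt_or_ge j 3 with h3 | h3
            · -- j = 2
              have := (IH 1 (by omega) (by omega)).2.2.2.2.2
              rwa [show n-1+1 = 2 + (n-1) - (j-1) by omega] at this
            · have := (IH (j-3) (by omega) (by omega)).2.2.2.2.1
              rwa [show n-1-(j-3) = 2 + (n-1) - (j-1) by omega] at this
          rw [hr2, hP1.1, he] at h
          linarith
        have hdj : d j = 0 := by
          have h := hF 1 (j-1) (by omega) (by omega)
          rw [show 1 + (j-1) = j by omega] at h
          have he : e (1 + (n-1) - (j-1)) = 0 := by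
            have := hP2.2.2.2.2.1
            rwa [show n-1-(j-2) = 1 + (n-1) - (j-1) by omega] at this
          rw [hr1, hP1.1, he] at h
          linarith
        have hcj : c j = 0 := by
          have h := hF 1 j (by omega) (by omega)
          rw [show 1 + j = j+1 by omega] at h
          have he : e (1 + (n-1) - j) = 0 := by
            have := hP1.2.2.2.2.1
            rwa [show n-1-(j-1) = 1 + (n-1) - j by omega] at this
          rw [hr1, hdj1, he] at h
          linarith
        have hrj : r j = 0 := by
          have h := hF j 1 (by omega) (by omega)
          have he : e (j + (n-1) - 1) = 0 := by
            have := hP1.2.2.2.2.2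
            rwa [show n-1+(j-1) = j + (n-1) - 1 by omega] at this
          rw [hc1, hdj1, he] at h
          linarith
        have hem : e (n-1-j) = 0 := by
          have h := hF 0 j (by omega) (by omega)
          rw [show (0:ℕ) + j = j by omega, show 0 + (n-1) - j = n-1-j by omega] at h
          rw [hr0, hcj, hdj] at h
          linarith
        have hep : e (n-1+j) = 0 := by
          have h := hF j 0 (by omega) (by omega)
          rw [show j + 0 = j by omega, show j + (n-1) - 0 = n-1+j by omega] at h
          rw [hc0, hrj, hdj] at h
          linarith
        exact ⟨hcj, hdj, hdj1, hrj, hem, hep⟩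
  refine ⟨fun i hi => (main i hi).2.2.2.1, fun j hj => (main j hj).1, ?_, ?_⟩
  · intro k hk
    rcases Nat.lt_or_ge k n with hkn | hkn
    · exact (main k hkn).2.1
    · have h := hF (n-1) (k-(n-1)) (by omega) (by omega)
      rw [show (n-1) + (k-(n-1)) = k by omega] at h
      have hr := (main (n-1) (by omega)).2.2.2.1
      have hc' := (main (k-(n-1)) (by omega)).1
      have he : e ((n-1) + (n-1) - (k-(n-1))) = 0 := by
        have := (main (2*n-2-k) (by omega)).2.2.2.2.2
        rwa [show n-1+(2*n-2-k) = (n-1) + (n-1) - (k-(n-1)) by omega] at this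
      rw [hr, hc', he] at h
      linarith
  · intro m hm
    rcases Nat.lt_or_ge m n with hmn | hmn
    · have := (main (n-1-m) (by omega)).2.2.2.2.1
      rwa [show n-1-(n-1-m) = m by omega] at this
    · have := (main (m-(n-1)) (by omega)).2.2.2.2.2
      rwa [show n-1+(m-(n-1)) = m by omega] at this

end QueensAux
end Part4
section Part5
namespace QueensAux
open Matrix

lemma ker_B_le (n : ℕ) (hn : 4 ≤ n) :
    Module.finrank ℝ (LinearMap.ker ((B n).mulVecLin)) ≤ 7 := by
  let coords : Fin 7 → Ln n := fun i =>
    match i with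
    | 0 => Sum.inl (Sum.inl ⟨0, by omega⟩)
    | 1 => Sum.inl (Sum.inl ⟨1, by omega⟩)
    | 2 => Sum.inl (Sum.inl ⟨2, by omega⟩)
    | 3 => Sum.inl (Sum.inr ⟨0, by omega⟩)
    | 4 => Sum.inl (Sum.inr ⟨1, by omega⟩)
    | 5 => Sum.inr (Sum.inl ⟨0, by omega⟩)
    | 6 => Sum.inr (Sum.inl ⟨1, by omega⟩)
  let φ : LinearMap.ker ((B n).mulVecLin) →ₗ[ℝ] (Fin 7 → ℝ) :=
    { toFun := fun x i => (x : Ln n → ℝ) (coords i)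
      map_add' := fun x y => rfl
      map_smul' := fun a x => rfl }
  have hinj : Function.Injective φ := by
    rw [← LinearMap.ker_eq_bot, LinearMap.ker_eq_bot']
    rintro ⟨x, hx⟩ hx0
    have hx' : (B n).mulVec x = 0 := hx
    have hz : ∀ i : Fin 7, x (coords i) = 0 := fun i => congrFun hx0 i
    set r : ℕ → ℝ := fun i => if h : i < n then x (Sum.inl (Sum.inl ⟨i, h⟩)) else 0 with hrdef
    set c : ℕ → ℝ := fun j => if h : j < n then x (Sum.inl (Sum.inr ⟨j, h⟩)) else 0 with hcdef
    set d : ℕ → ℝ := fun k => if h : k < 2*n-1 then x (Sum.inr (Sum.inl ⟨k, h⟩)) else 0 with hddef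
    set e : ℕ → ℝ := fun m => if h : m < 2*n-1 then x (Sum.inr (Sum.inr ⟨m, h⟩)) else 0 with hedef
    have hF : ∀ i j : ℕ, i < n → j < n →
        r i + c j + d (i + j) + e (i + (n-1) - j) = 0 := by
      intro i j hi hj
      have hxu := congrFun hx' (⟨i, hi⟩, ⟨j, hj⟩)
      rw [Matrix.mulVec, Pi.zero_apply] at hxu
      change ∑ l : Ln n, B n (⟨i, hi⟩, ⟨j, hj⟩) l * x l = 0 at hxu
      simp only [Fintype.sum_sum_type] at hxu
      simp only [B] at hxu
      rw [collapseP (a := i) hi (fun l => by constructor <;> (intro h; omega))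
          (fun l => x (Sum.inl (Sum.inl l)))] at hxu
      rw [collapseP (a := j) hj (fun l => by constructor <;> (intro h; omega))
          (fun l => x (Sum.inl (Sum.inr l)))] at hxu
      rw [collapseP (a := i + j) (by omega) (fun l => by constructor <;> (intro h; omega))
          (fun l => x (Sum.inr (Sum.inl l)))] at hxu
      rw [collapseP (a := i + (n-1) - j) (by omega)
          (fun l => by constructor <;> (intro h; omega))
          (fun l => x (Sum.inr (Sum.inr l)))] at hxu
      simp only [hrdef, hcdef, hddef, hedef]
      rw [dif_pos hi, dif_pos hj, dif_pos (show i + j < 2*n-1 by omega),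
        dif_pos (show i + (n-1) - j < 2*n-1 by omega)]
      linarith [hxu]
    have h7 := elim n hn r c d e hF
      (by simp only [hrdef]; rw [dif_pos (show (0:ℕ) < n by omega)]; exact hz 0)
      (by simp only [hrdef]; rw [dif_pos (show (1:ℕ) < n by omega)]; exact hz 1)
      (by simp only [hrdef]; rw [dif_pos (show (2:ℕ) < n by omega)]; exact hz 2)
      (by simp only [hcdef]; rw [dif_pos (show (0:ℕ) < n by omega)]; exact hz 3)
      (by simp only [hcdef]; rw [dif_pos (show (1:ℕ) < n by omega)]; exact hz 4)
      (by simp only [hddef]; rw [dif_pos (show (0:ℕ) < 2*n-1 by omega)]; exact hz 5)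
      (by simp only [hddef]; rw [dif_pos (show (1:ℕ) < 2*n-1 by omega)]; exact hz 6)
    apply Subtype.ext
    show x = 0
    funext l
    rw [Pi.zero_apply]
    match l with
    | .inl (.inl a) =>
      have := h7.1 (a : ℕ) a.isLt
      simp only [hrdef] at this
      rw [dif_pos a.isLt] at this
      simpa using this
    | .inl (.inr a) =>
      have := h7.2.1 (a : ℕ) a.isLt
      simp only [hcdef] at this
      rw [dif_pos a.isLt] at this
      simpa using this
    | .inr (.inl a) =>
      have := h7.2.2.1 (a : ℕ) (by have := a.isLt; omega)
      simp only [hddef] at this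
      rw [dif_pos a.isLt] at this
      simpa using this
    | .inr (.inr a) =>
      have := h7.2.2.2 (a : ℕ) (by have := a.isLt; omega)
      simp only [hedef] at this
      rw [dif_pos a.isLt] at this
      simpa using this
  calc Module.finrank ℝ (LinearMap.ker ((B n).mulVecLin))
      ≤ Module.finrank ℝ (Fin 7 → ℝ) := LinearMap.finrank_le_finrank_of_injective hinj
    _ = 7 := by simp [Module.finrank_fintype_fun_eq_card]

end QueensAux
end Part5
open Matrix QueensAux in
/-- for `n ≥ 4`, `-4` is an eigenvalue of the adjacency matrix `A`
of `Q(n)` with multiplicity exactly `(n-3)²`, i.e. `ker (A + 4I)` has dimension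
`(n-3)²`. -/
theorem queens_neg_four_multiplicity (n : ℕ) (hn : 4 ≤ n) :
    (∃ x : Fin n × Fin n → ℝ, x ≠ 0 ∧
        ((queensGraph n).adjMatrix ℝ).mulVec x = (-4 : ℝ) • x) ∧
      Module.finrank ℝ
        (LinearMap.ker
          (((queensGraph n).adjMatrix ℝ + (4 : ℝ) • (1 : Matrix (Fin n × Fin n) (Fin n × Fin n) ℝ)).mulVecLin)) =
        (n - 3) ^ 2 := by
  classical
  have hker : LinearMap.ker
        (((queensGraph n).adjMatrix ℝ + (4 : ℝ) • (1 : Matrix (Fin n × Fin n) (Fin n × Fin n) ℝ)).mulVecLin)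
      = LinearMap.ker ((QueensAux.B n)ᵀ.mulVecLin) := by
    rw [QueensAux.BBt n hn]
    have hconj : QueensAux.B n * (QueensAux.B n)ᵀ
        = ((QueensAux.B n)ᵀ)ᴴ * (QueensAux.B n)ᵀ := by
      congr 1
    rw [hconj, Matrix.ker_mulVecLin_conjTranspose_mul_self]
  have hrk1 : Module.finrank ℝ (LinearMap.range ((QueensAux.B n)ᵀ.mulVecLin))
      + Module.finrank ℝ (LinearMap.ker ((QueensAux.B n)ᵀ.mulVecLin))
      = n * n := by
    rw [LinearMap.finrank_range_add_finrank_ker]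
    rw [Module.finrank_fintype_fun_eq_card, Fintype.card_prod, Fintype.card_fin]
  have hrk2 : Module.finrank ℝ (LinearMap.range ((QueensAux.B n).mulVecLin))
      + Module.finrank ℝ (LinearMap.ker ((QueensAux.B n).mulVecLin))
      = 6 * n - 2 := by
    rw [LinearMap.finrank_range_add_finrank_ker]
    rw [Module.finrank_fintype_fun_eq_card]
    simp only [QueensAux.Ln, Fintype.card_sum, Fintype.card_fin]
    omega
  have hrkT : Module.finrank ℝ (LinearMap.range ((QueensAux.B n)ᵀ.mulVecLin))
      = Module.finrank ℝ (LinearMap.range ((QueensAux.B n).mulVecLin)) :=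
    Matrix.rank_transpose (QueensAux.B n)
  have hlow := QueensAux.lower_bound n hn
  have hup := QueensAux.ker_B_le n hn
  have hsq : (n - 3) ^ 2 = (n - 3) * (n - 3) := sq (n - 3)
  have hexp : n * n = (n - 3) * (n - 3) + (6 * n - 9) := by
    obtain ⟨m, rfl⟩ : ∃ m, n = m + 3 := ⟨n - 3, by omega⟩
    simp only [Nat.add_sub_cancel]
    ring_nf
    omega
  have hdim : Module.finrank ℝ (LinearMap.ker ((QueensAux.B n)ᵀ.mulVecLin))
      = (n - 3) ^ 2 := by
    rw [hsq] at hlow ⊢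
    omega
  constructor
  · -- eigenvector
    have hne : LinearMap.ker
        (((queensGraph n).adjMatrix ℝ + (4 : ℝ) • (1 : Matrix (Fin n × Fin n) (Fin n × Fin n) ℝ)).mulVecLin) ≠ ⊥ := by
      intro hbot
      rw [hker] at hbot
      rw [hbot, finrank_bot] at hdim
      have : (n - 3) ^ 2 ≠ 0 := by
        rw [hsq]
        have : 1 ≤ n - 3 := by omega
        exact Nat.mul_ne_zero (by omega) (by omega)
      exact this hdim.symm
    obtain ⟨x, hxmem, hx0⟩ := Submodule.exists_mem_ne_zero_of_ne_bot hne
    refine ⟨x, hx0, ?_⟩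
    rw [LinearMap.mem_ker, Matrix.mulVecLin_apply, Matrix.add_mulVec,
      Matrix.smul_mulVec, Matrix.one_mulVec] at hxmem
    have : ((queensGraph n).adjMatrix ℝ).mulVec x = -((4:ℝ) • x) := by
      linear_combination (norm := module) hxmem
    rw [this, ← neg_smul]
  · rw [hker]
    exact hdim
end
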